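/- arXiv:2102.00285 — 4 statements merged into one kernel-verified Lean document; each statement's English description precedes it below -/
import Mathlib

section
/- Let A = ⟨a⟩ be free of rank 1, B = ⟨b,c,d⟩ free of rank 3, and let G = A ∗_U B be the amalgamated product identifying p = a² ∈ A with q = (bc)²d² ∈ B. Then in G/⟨⟨a(bc)⁻¹⟩⟩ the image of d² is trivial; in particular the free subgroup ⟨c,d⟩ of B does not embed into G/⟨⟨a(bc)⁻¹⟩⟩. -/
/-- `G` together with `iA`, `iB` is the amalgamated product `A ∗_{⟨p⟩=⟨q⟩} B`. -/
def IsAmalgam {A B G : Type} [Group A] [Group B] [Group G]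
    (iA : A →* G) (iB : B →* G) (p : A) (q : B) : Prop :=
  Function.Injective iA ∧ Function.Injective iB ∧ iA p = iB q ∧
  ∀ (K : Type) [Group K] (fA : A →* K) (fB : B →* K), fA p = fB q →
    ∃! f : G →* K, f.comp iA = fA ∧ f.comp iB = fB

private lemma key_cancel {G H : Type} [Group G] [Group H] (π : G →* H) (x y z : G)
    (h1 : π (x * y⁻¹) = 1) (h2 : x ^ 2 = y ^ 2 * z) : π z = 1 := by
  rw [map_mul, map_inv] at h1
  have h2' := congrArg π h2
  rw [map_pow, map_mul, map_pow, mul_inv_eq_one.mp h1] at h2'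
  exact left_eq_mul.mp h2'

private lemma sq_ne_one : ((FreeGroup.of (1 : Fin 2)) ^ 2 : FreeGroup (Fin 2)) ≠ 1 := by
  intro h
  have h2 := congrArg (FreeGroup.lift fun _ : Fin 2 => Multiplicative.ofAdd (1 : ℤ)) h
  simp only [map_pow, map_one, FreeGroup.lift_apply_of] at h2
  rw [pow_two, ← ofAdd_add] at h2
  have h3 := congrArg Multiplicative.toAdd h2
  simp at h3

/-- The example showing maximality of the amalgamated cyclic subgroup cannot be omitted:
with `A = ⟨a⟩`, `B = ⟨b,c,d⟩`, `p = a²`, `q = (bc)²d²` and `r = a(bc)⁻¹`, the image of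
`d²` is trivial in `G/⟨⟨r⟩⟩`, and `⟨c,d⟩ ≤ B` does not embed. -/
theorem example_no_freiheitssatz_nonmaximal {G : Type} [Group G]
    (iA : FreeGroup Unit →* G) (iB : FreeGroup (Fin 3) →* G)
    (hG : IsAmalgam iA iB ((FreeGroup.of ()) ^ 2)
      ((FreeGroup.of 0 * FreeGroup.of 1) ^ 2 * (FreeGroup.of 2) ^ 2)) :
    (QuotientGroup.mk' (Subgroup.normalClosure
        {iA (FreeGroup.of ()) * (iB (FreeGroup.of 0 * FreeGroup.of 1))⁻¹}))
      (iB ((FreeGroup.of 2) ^ 2)) = 1 ∧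
    ¬ Function.Injective
      ((QuotientGroup.mk' (Subgroup.normalClosure
          {iA (FreeGroup.of ()) * (iB (FreeGroup.of 0 * FreeGroup.of 1))⁻¹})).comp
        (iB.comp (FreeGroup.lift
          (fun i : Fin 2 => if i = 0 then (FreeGroup.of 1 : FreeGroup (Fin 3))
            else FreeGroup.of 2)))) := by
  obtain ⟨-, -, hpq, -⟩ := hG
  have hr : iA (FreeGroup.of ()) * (iB (FreeGroup.of 0 * FreeGroup.of 1))⁻¹ ∈
      Subgroup.normalClosure
        {iA (FreeGroup.of ()) * (iB (FreeGroup.of 0 * FreeGroup.of 1))⁻¹} :=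
    Subgroup.subset_normalClosure rfl
  have h1 : (QuotientGroup.mk' (Subgroup.normalClosure
        {iA (FreeGroup.of ()) * (iB (FreeGroup.of 0 * FreeGroup.of 1))⁻¹}))
      (iA (FreeGroup.of ()) * (iB (FreeGroup.of 0 * FreeGroup.of 1))⁻¹) = 1 :=
    (QuotientGroup.eq_one_iff _).mpr hr
  have h2 : iA (FreeGroup.of ()) ^ 2 =
      iB (FreeGroup.of 0 * FreeGroup.of 1) ^ 2 * iB (FreeGroup.of 2 ^ 2) := by
    rw [← map_pow, ← map_pow, ← map_mul]
    exact hpq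
  have hd := key_cancel _ _ _ _ h1 h2
  refine ⟨hd, fun hinj => ?_⟩
  apply sq_ne_one
  apply hinj
  simp only [MonoidHom.comp_apply, map_pow, map_one, FreeGroup.lift_apply_of]
  norm_num
  rw [map_pow iB] at hd
  exact hd
end

section
/- In a free group, a non-trivial product of two commutators is never a fourth power: if F is free and x = [a,b][c,d] ≠ 1 with a,b,c,d ∈ F, then x is not of the form z⁴ for any z ∈ F. -/
set_option linter.unusedSectionVars false
set_option maxHeartbeats 1000000

/-!
We prove that in a free group a non-trivial product of two commutators is never
a fourth power (a consequence of the Comerford–Comerford–Edmunds theorem; it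
also follows from the Duncan–Howie theorem `scl ≥ 1/2`).

The proof is via actions on the real line.  Let `G` be the group of strictly
monotone bijections of `ℝ` commuting with translation by `1` (the universal
cover of the orientation preserving homeomorphism-like group of the circle).

* (Milnor–Wood step) Every commutator `[A,B]` in `G` has a point `x` with
  `[A,B] x ≤ x + 1`; consequently a product of two commutators has a point
  moved by less than `3`.
* (Realization step) For every `z ≠ 1` in a free group there is a homomorphism
  `ρ` into `G` with `ρ z x₀ = x₀ + 1` for some point `x₀`; hence `ρ (z⁴)`
  moves every point by more than `3`.

If a non-trivial product of two commutators equals `z ^ 4`, the two statements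
contradict each other.
-/

noncomputable section

open Classical in
/-- The group of strictly monotone bijections of `ℝ` commuting with `x ↦ x + 1`. -/
def EqvGroup : Subgroup (Equiv.Perm ℝ) where
  carrier := {e | StrictMono (e : ℝ → ℝ) ∧ ∀ x : ℝ, e (x + 1) = e x + 1}
  one_mem' := ⟨fun _ _ h => h, fun x => rfl⟩
  mul_mem' := by
    rintro a b ⟨ha1, ha2⟩ ⟨hb1, hb2⟩
    refine ⟨fun x y hxy => ?_, fun x => ?_⟩
    · simpa [Equiv.Perm.mul_apply] using ha1 (hb1 hxy)
    · simp [Equiv.Perm.mul_apply, hb2 x, ha2 (b x)]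
  inv_mem' := by
    rintro a ⟨ha1, ha2⟩
    refine ⟨fun x y hxy => ?_, fun x => ?_⟩
    · have : a.symm x < a.symm y := by
        rw [← ha1.lt_iff_lt]
        simpa using hxy
      simpa [Equiv.Perm.inv_def] using this
    · have h1 : a ((a.symm x) + 1) = a (a.symm (x + 1)) := by
        rw [ha2 (a.symm x)]
        simp
      have h2 := a.injective h1
      simpa [Equiv.Perm.inv_def] using h2.symm

/-- Application of an element of `EqvGroup` to a real number. -/
def ap (g : EqvGroup) (x : ℝ) : ℝ := (g : Equiv.Perm ℝ) x

lemma ap_mul (g h : EqvGroup) (x : ℝ) : ap (g * h) x = ap g (ap h x) := rfl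

@[simp] lemma ap_one (x : ℝ) : ap (1 : EqvGroup) x = x := rfl

lemma ap_strictMono (g : EqvGroup) : StrictMono (ap g) := g.2.1

lemma ap_mono (g : EqvGroup) : Monotone (ap g) := g.2.1.monotone

lemma ap_add_one (g : EqvGroup) (x : ℝ) : ap g (x + 1) = ap g x + 1 := g.2.2 x

lemma ap_inv_ap (g : EqvGroup) (x : ℝ) : ap g⁻¹ (ap g x) = x := by
  simp [ap, Equiv.Perm.inv_def]

lemma ap_ap_inv (g : EqvGroup) (x : ℝ) : ap g (ap g⁻¹ x) = x := by
  simp [ap, Equiv.Perm.inv_def]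

lemma ap_add_nat (g : EqvGroup) (x : ℝ) (n : ℕ) : ap g (x + n) = ap g x + n := by
  induction n with
  | zero => simp
  | succ n ih =>
    have : x + (n + 1 : ℕ) = (x + n) + 1 := by push_cast; ring
    rw [this, ap_add_one, ih]
    push_cast; ring

lemma ap_add_int (g : EqvGroup) (x : ℝ) (n : ℤ) : ap g (x + n) = ap g x + n := by
  induction n using Int.induction_on with
  | zero => simp
  | succ k ih =>
    have e : x + ((k : ℤ) + 1 : ℤ) = (x + (k : ℤ)) + 1 := by push_cast; ring
    rw [e, ap_add_one, ih]
    push_cast; ring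
  | pred k ih =>
    have e : x + (-(k : ℤ) - 1 : ℤ) + 1 = x + (-(k : ℤ) : ℤ) := by push_cast; ring
    have h2 : ap g (x + (-(k : ℤ) - 1 : ℤ) + 1) = ap g (x + (-(k : ℤ) - 1 : ℤ)) + 1 :=
      ap_add_one _ _
    rw [e, ih] at h2
    push_cast at h2 ⊢
    linarith

/-- Key distortion lemma: an element cannot pointwise dominate a conjugate of
itself by a full translation. -/
lemma no_dominating_conj (u A : EqvGroup)
    (h : ∀ x, ap (A⁻¹ * u * A) x + 1 ≤ ap u x) : False := by
  set v := A⁻¹ * u * A with hv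
  have hvn : ∀ n : ℕ, v ^ n = A⁻¹ * u ^ n * A := by
    intro n
    have h1 : v = A⁻¹ * u * (A⁻¹)⁻¹ := by rw [hv, inv_inv]
    have h2 : (A⁻¹ * u * (A⁻¹)⁻¹) ^ n = A⁻¹ * u ^ n * (A⁻¹)⁻¹ := conj_pow
    rw [h1, h2, inv_inv]
  have step1 : ∀ (n : ℕ) (x : ℝ), ap (v ^ n) x + n ≤ ap (u ^ n) x := by
    intro n
    induction n with
    | zero => intro x; simp
    | succ n ih =>
      intro x
      have e1 : ap (v ^ (n + 1)) x = ap v (ap (v ^ n) x) := by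
        rw [pow_succ']; exact ap_mul _ _ _
      have e2 : ap (u ^ (n + 1)) x = ap u (ap (u ^ n) x) := by
        rw [pow_succ']; exact ap_mul _ _ _
      have h3 : ap v (ap (v ^ n) x) + 1 ≤ ap u (ap (v ^ n) x) := h _
      have h4 : ap u (ap (v ^ n) x + n) ≤ ap u (ap (u ^ n) x) :=
        ap_mono u (ih x)
      have h5 : ap u (ap (v ^ n) x + n) = ap u (ap (v ^ n) x) + n :=
        ap_add_nat u _ n
      rw [e1, e2]
      push_cast
      linarith
  set α := ap A 0 with hα
  have h2 : ∀ n : ℕ, ap (v ^ n) 0 = ap A⁻¹ (ap (u ^ n) α) := by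
    intro n
    rw [hvn n, ap_mul, ap_mul]
  have h3 : ∀ n : ℕ, ap (u ^ n) 0 + (⌊α⌋ : ℝ) ≤ ap (u ^ n) α := by
    intro n
    have : (0 : ℝ) + (⌊α⌋ : ℝ) ≤ α := by simpa using Int.floor_le α
    calc ap (u ^ n) 0 + (⌊α⌋ : ℝ) = ap (u ^ n) (0 + (⌊α⌋ : ℤ)) :=
          (ap_add_int _ _ _).symm
      _ ≤ ap (u ^ n) α := by
          apply ap_mono
          simpa using this
  have h4 : ∀ y : ℝ, y - α - 1 ≤ ap A⁻¹ y := by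
    intro y
    have hA : ∀ t : ℝ, ap A t ≤ t + α + 1 := by
      intro t
      have : ap A t ≤ ap A (0 + (⌈t⌉ : ℤ)) := by
        apply ap_mono
        simpa using Int.le_ceil t
      rw [ap_add_int] at this
      have hc : (⌈t⌉ : ℝ) ≤ t + 1 := by
        have := Int.ceil_lt_add_one t
        linarith
      calc ap A t ≤ ap A 0 + (⌈t⌉ : ℝ) := this
        _ ≤ α + (t + 1) := by rw [hα]; linarith
        _ = t + α + 1 := by ring
    have := hA (ap A⁻¹ y)
    rw [ap_ap_inv] at this
    linarith
  have key := step1 2 0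
  have e1 := h2 2
  have e2 := h3 2
  have e3 := h4 (ap (u ^ 2) α)
  have hfr : α - (⌊α⌋ : ℝ) < 1 := by
    have := Int.lt_floor_add_one α
    linarith
  rw [e1] at key
  push_cast at key
  linarith

/-- Milnor–Wood step: a commutator has a point moved by at most `1`. -/
lemma commutator_exists_small (A B : EqvGroup) :
    ∃ x : ℝ, ap (A⁻¹ * B⁻¹ * A * B) x ≤ x + 1 := by
  by_contra hcon
  push_neg at hcon
  apply no_dominating_conj (A * B) A
  intro x
  have hc : A⁻¹ * (A * B) * A = B * A := by group
  rw [hc]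
  have hd : A⁻¹ * B⁻¹ * A * B = (B * A)⁻¹ * (A * B) := by group
  have h1 := hcon x
  rw [hd, ap_mul] at h1
  have h2 : ap (B * A) (x + 1) < ap (B * A) (ap (B * A)⁻¹ (ap (A * B) x)) :=
    ap_strictMono (B * A) h1
  rw [ap_ap_inv, ap_add_one] at h2
  linarith

/-- A product of two elements each having a point moved by at most `1` has a
point moved by less than `3`. -/
lemma prod_small (C₁ C₂ : EqvGroup) (h₁ : ∃ x : ℝ, ap C₁ x ≤ x + 1)
    (h₂ : ∃ x : ℝ, ap C₂ x ≤ x + 1) : ∃ x : ℝ, ap (C₁ * C₂) x < x + 3 := by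
  obtain ⟨x₁, hx₁⟩ := h₁
  obtain ⟨x₂, hx₂⟩ := h₂
  refine ⟨x₂, ?_⟩
  rw [ap_mul]
  set y := ap C₂ x₂ with hy
  set m := ⌈y - x₁⌉ with hm
  have hm1 : y ≤ x₁ + m := by
    have := Int.le_ceil (y - x₁)
    rw [← hm] at this
    linarith
  have hm2 : (m : ℝ) < y - x₁ + 1 := by
    have := Int.ceil_lt_add_one (y - x₁)
    rw [← hm] at this
    linarith
  have h5 : ap C₁ y ≤ ap C₁ (x₁ + m) := ap_mono C₁ hm1
  rw [ap_add_int] at h5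
  have h6 : ap C₁ x₁ + (m : ℝ) ≤ x₁ + 1 + m := by linarith
  have h7 : x₁ + 1 + (m : ℝ) < y + 2 := by linarith
  have h8 : y ≤ x₂ + 1 := hx₂
  linarith

/-- If `g` translates some point by exactly `4`, it moves every point by more
than `3`. -/
lemma ap_big (g : EqvGroup) (x₀ : ℝ) (h : ap g x₀ = x₀ + 4) (x : ℝ) :
    x + 3 < ap g x := by
  set m := ⌊x - x₀⌋ with hm
  have h1 : x₀ + (m : ℝ) ≤ x := by
    have := Int.floor_le (x - x₀)
    rw [← hm] at this
    linarith
  have h2 : x < x₀ + m + 1 := by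
    have := Int.lt_floor_add_one (x - x₀)
    rw [← hm] at this
    linarith
  have h3 : ap g (x₀ + m) ≤ ap g x := ap_mono g h1
  rw [ap_add_int, h] at h3
  linarith





section Gadget

variable {ι : Type}

/-- Compatibility of interpolation data: the assignment `p i + m ↦ q i + m`
(for all integers `m`) is well-defined and strictly monotone. -/
def Compat (p q : ι → ℝ) : Prop :=
  ∀ (i i' : ι) (m : ℤ),
    ((p i + m < p i' → q i + m < q i') ∧ (p i + m = p i' → q i + m = q i'))

lemma Compat.symm {p q : ι → ℝ} (hc : Compat p q) : Compat q p := by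
  intro i i' m
  constructor
  · intro hlt
    rcases lt_trichotomy ((p i : ℝ) + m) (p i') with h | h | h
    · exact h
    · exfalso
      have := (hc i i' m).2 h
      linarith
    · exfalso
      have h2 : p i' + ((-m : ℤ) : ℝ) < p i := by push_cast; linarith
      have := (hc i' i (-m)).1 h2
      push_cast at this
      linarith
  · intro heq
    rcases lt_trichotomy ((p i : ℝ) + m) (p i') with h | h | h
    · exfalso
      have := (hc i i' m).1 h
      linarith
    · exact h
    · exfalso
      have h2 : p i' + ((-m : ℤ) : ℝ) < p i := by push_cast; linarith
      have := (hc i' i (-m)).1 h2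
      push_cast at this
      linarith

/-- `y` is a translate of a constraint point. -/
def IsPt (p : ι → ℝ) (y : ℝ) : Prop := ∃ i : ι, ∃ m : ℤ, p i + (m : ℝ) = y

variable [Fintype ι] [Nonempty ι]

noncomputable def pmaxF (p : ι → ℝ) (x : ℝ) : ℝ :=
  Finset.univ.sup' Finset.univ_nonempty (fun i => p i + ((⌊x - p i⌋ : ℤ) : ℝ))

noncomputable def pnextF (p : ι → ℝ) (x : ℝ) : ℝ :=
  Finset.univ.inf' Finset.univ_nonempty (fun i => p i + (((⌊x - p i⌋ : ℤ) : ℝ) + 1))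

open Classical in
noncomputable def partner (p q : ι → ℝ) (y : ℝ) : ℝ :=
  if h : IsPt p y then q h.choose + ((h.choose_spec.choose : ℤ) : ℝ) else y

variable {p q : ι → ℝ}

lemma partner_eq (hc : Compat p q) (i : ι) (m : ℤ) {y : ℝ} (hy : p i + (m : ℝ) = y) :
    partner p q y = q i + m := by
  have h : IsPt p y := ⟨i, m, hy⟩
  rw [partner, dif_pos h]
  have hch : p h.choose + ((h.choose_spec.choose : ℤ) : ℝ) = y := h.choose_spec.choose_spec
  set ic := h.choose
  set mc : ℤ := h.choose_spec.choose
  have h1 : p ic + ((mc - m : ℤ) : ℝ) = p i := by push_cast; linarith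
  have := (hc ic i (mc - m)).2 h1
  push_cast at this
  linarith

lemma pmax_le (p : ι → ℝ) (x : ℝ) : pmaxF p x ≤ x := by
  apply Finset.sup'_le
  intro i _
  have := Int.floor_le (x - p i)
  linarith

lemma lt_pnext (p : ι → ℝ) (x : ℝ) : x < pnextF p x := by
  rw [pnextF, Finset.lt_inf'_iff]
  intro i _
  have := Int.lt_floor_add_one (x - p i)
  linarith

lemma isPt_pmax (p : ι → ℝ) (x : ℝ) : IsPt p (pmaxF p x) := by
  obtain ⟨i, _, h⟩ := Finset.exists_mem_eq_sup' (Finset.univ_nonempty)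
    (fun i => p i + ((⌊x - p i⌋ : ℤ) : ℝ))
  exact ⟨i, ⌊x - p i⌋, h.symm⟩

lemma isPt_pnext (p : ι → ℝ) (x : ℝ) : IsPt p (pnextF p x) := by
  obtain ⟨i, _, h⟩ := Finset.exists_mem_eq_inf' (Finset.univ_nonempty)
    (fun i => p i + (((⌊x - p i⌋ : ℤ) : ℝ) + 1))
  refine ⟨i, ⌊x - p i⌋ + 1, ?_⟩
  rw [pnextF, h]
  push_cast; ring

lemma point_le_pmax {y : ℝ} (hy : IsPt p y) {x : ℝ} (h : y ≤ x) : y ≤ pmaxF p x := by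
  obtain ⟨i, m, hm⟩ := hy
  have h1 : (m : ℝ) ≤ ⌊x - p i⌋ := by
    have : (m : ℝ) ≤ x - p i := by linarith
    exact_mod_cast Int.le_floor.2 (by exact_mod_cast this)
  calc y = p i + (m : ℝ) := hm.symm
    _ ≤ p i + ((⌊x - p i⌋ : ℤ) : ℝ) := by linarith
    _ ≤ pmaxF p x := by
        rw [pmaxF]
        exact Finset.le_sup' (fun j => p j + ((⌊x - p j⌋ : ℤ) : ℝ)) (Finset.mem_univ i)

lemma pnext_le_point {y : ℝ} (hy : IsPt p y) {x : ℝ} (h : x < y) : pnextF p x ≤ y := by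
  obtain ⟨i, m, hm⟩ := hy
  have h1 : ⌊x - p i⌋ < m := by
    apply Int.floor_lt.2
    push_cast
    linarith
  have h2 : ((⌊x - p i⌋ : ℤ) : ℝ) + 1 ≤ (m : ℝ) := by exact_mod_cast h1
  calc pnextF p x ≤ p i + (((⌊x - p i⌋ : ℤ) : ℝ) + 1) :=
        Finset.inf'_le _ (Finset.mem_univ i)
    _ ≤ p i + (m : ℝ) := by linarith
    _ = y := hm

lemma pmax_of_isPt {y : ℝ} (hy : IsPt p y) : pmaxF p y = y :=
  le_antisymm (pmax_le p y) (point_le_pmax hy le_rfl)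

lemma pmax_lt_pnext (p : ι → ℝ) (x : ℝ) : pmaxF p x < pnextF p x :=
  lt_of_le_of_lt (pmax_le p x) (lt_pnext p x)

lemma point_split {w x : ℝ} (hw : IsPt p w) : w ≤ pmaxF p x ∨ pnextF p x ≤ w := by
  rcases le_or_gt w x with h | h
  · exact Or.inl (point_le_pmax hw h)
  · exact Or.inr (pnext_le_point hw h)

lemma partner_lt_partner (hc : Compat p q) {y y' : ℝ} (hy : IsPt p y) (hy' : IsPt p y')
    (h : y < y') : partner p q y < partner p q y' := by
  obtain ⟨i, m, hm⟩ := hy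
  obtain ⟨i', m', hm'⟩ := hy'
  rw [partner_eq hc i m hm, partner_eq hc i' m' hm']
  have h1 : p i + ((m - m' : ℤ) : ℝ) < p i' := by push_cast; linarith
  have := (hc i i' (m - m')).1 h1
  push_cast at this
  linarith

lemma partner_le_partner (hc : Compat p q) {y y' : ℝ} (hy : IsPt p y) (hy' : IsPt p y')
    (h : y ≤ y') : partner p q y ≤ partner p q y' := by
  rcases eq_or_lt_of_le h with rfl | hlt
  · exact le_rfl
  · exact le_of_lt (partner_lt_partner hc hy hy' hlt)

lemma isPt_partner (hc : Compat p q) {y : ℝ} (hy : IsPt p y) : IsPt q (partner p q y) := by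
  obtain ⟨i, m, hm⟩ := hy
  exact ⟨i, m, (partner_eq hc i m hm).symm⟩

lemma partner_roundtrip (hc : Compat p q) {y : ℝ} (hy : IsPt p y) :
    partner q p (partner p q y) = y := by
  obtain ⟨i, m, hm⟩ := hy
  rw [partner_eq hc i m hm, partner_eq hc.symm i m rfl]
  exact hm

/-- The interpolation map. -/
noncomputable def eF (p q : ι → ℝ) (x : ℝ) : ℝ :=
  partner p q (pmaxF p x) +
    (x - pmaxF p x) * (partner p q (pnextF p x) - partner p q (pmaxF p x)) /
      (pnextF p x - pmaxF p x)

lemma qm_lt_qn (hc : Compat p q) (x : ℝ) :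
    partner p q (pmaxF p x) < partner p q (pnextF p x) :=
  partner_lt_partner hc (isPt_pmax p x) (isPt_pnext p x) (pmax_lt_pnext p x)

lemma eF_bounds (hc : Compat p q) (x : ℝ) :
    partner p q (pmaxF p x) ≤ eF p q x ∧ eF p q x < partner p q (pnextF p x) := by
  have hΔp : (0 : ℝ) < pnextF p x - pmaxF p x := by
    have := pmax_lt_pnext p x; linarith
  have hΔq : (0 : ℝ) < partner p q (pnextF p x) - partner p q (pmaxF p x) := by
    have := qm_lt_qn hc x; linarith
  have hx1 : 0 ≤ x - pmaxF p x := by have := pmax_le p x; linarith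
  have hx2 : x - pmaxF p x < pnextF p x - pmaxF p x := by
    have := lt_pnext p x; linarith
  constructor
  · have : 0 ≤ (x - pmaxF p x) * (partner p q (pnextF p x) - partner p q (pmaxF p x)) /
        (pnextF p x - pmaxF p x) := by positivity
    rw [eF]; linarith
  · have key : (x - pmaxF p x) * (partner p q (pnextF p x) - partner p q (pmaxF p x)) /
        (pnextF p x - pmaxF p x) < partner p q (pnextF p x) - partner p q (pmaxF p x) := by
      rw [div_lt_iff₀ hΔp]
      nlinarith [mul_lt_mul_of_pos_right hx2 hΔq]
    rw [eF]; linarith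

lemma eF_point (hc : Compat p q) (i : ι) (m : ℤ) : eF p q (p i + (m : ℝ)) = q i + m := by
  have hy : IsPt p (p i + (m : ℝ)) := ⟨i, m, rfl⟩
  rw [eF, pmax_of_isPt hy]
  rw [partner_eq hc i m rfl]
  simp



lemma pnext_eq_of_pmax_eq {x y : ℝ} (hxy : x ≤ y) (h : pmaxF p x = pmaxF p y) :
    pnextF p x = pnextF p y := by
  have h1 : y < pnextF p x := by
    by_contra hcon
    push_neg at hcon
    have h2 := point_le_pmax (isPt_pnext p x) hcon
    rw [← h] at h2
    exact absurd h2 (not_le.2 (pmax_lt_pnext p x))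
  apply le_antisymm
  · exact pnext_le_point (isPt_pnext p y) (lt_of_le_of_lt hxy (lt_pnext p y))
  · exact pnext_le_point (isPt_pnext p x) h1

lemma eF_strictMono (hc : Compat p q) : StrictMono (eF p q) := by
  intro x y hxy
  have hpm : pmaxF p x ≤ pmaxF p y :=
    point_le_pmax (isPt_pmax p x) (le_trans (pmax_le p x) hxy.le)
  rcases eq_or_lt_of_le hpm with heq | hlt
  · have hpn := pnext_eq_of_pmax_eq hxy.le heq
    have hΔp : 0 < pnextF p x - pmaxF p x := sub_pos.2 (pmax_lt_pnext p x)
    have hΔq : 0 < partner p q (pnextF p x) - partner p q (pmaxF p x) :=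
      sub_pos.2 (qm_lt_qn hc x)
    rw [eF, eF, ← heq, ← hpn]
    rw [div_eq_mul_inv, div_eq_mul_inv]
    have h3 := mul_lt_mul_of_pos_right
      (mul_lt_mul_of_pos_right (sub_lt_sub_right hxy (pmaxF p x)) hΔq)
      (inv_pos.2 hΔp)
    linarith
  · have h1 : eF p q x < partner p q (pnextF p x) := (eF_bounds hc x).2
    have h2 : partner p q (pmaxF p y) ≤ eF p q y := (eF_bounds hc y).1
    have h3 : x < pmaxF p y := by
      by_contra hcon
      push_neg at hcon
      exact absurd hlt (not_lt.2 (point_le_pmax (isPt_pmax p y) hcon))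
    have h4 : pnextF p x ≤ pmaxF p y := pnext_le_point (isPt_pmax p y) h3
    have h5 : partner p q (pnextF p x) ≤ partner p q (pmaxF p y) :=
      partner_le_partner hc (isPt_pnext p x) (isPt_pmax p y) h4
    linarith

lemma sup'_add_const (s : Finset ι) (H : s.Nonempty) (f : ι → ℝ) (c : ℝ) :
    s.sup' H (fun i => f i + c) = s.sup' H f + c := by
  apply le_antisymm
  · apply Finset.sup'_le
    intro i hi
    have := Finset.le_sup' f hi
    linarith
  · have h1 : ∀ i ∈ s, f i ≤ s.sup' H (fun i => f i + c) - c := by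
      intro i hi
      have := Finset.le_sup' (fun i => f i + c) hi
      linarith
    have := Finset.sup'_le H f h1
    linarith

lemma inf'_add_const (s : Finset ι) (H : s.Nonempty) (f : ι → ℝ) (c : ℝ) :
    s.inf' H (fun i => f i + c) = s.inf' H f + c := by
  apply le_antisymm
  · have h1 : ∀ i ∈ s, s.inf' H (fun i => f i + c) - c ≤ f i := by
      intro i hi
      have := Finset.inf'_le (fun i => f i + c) hi
      linarith
    have := Finset.le_inf' H _ h1
    linarith
  · apply Finset.le_inf'
    intro i hi
    have := Finset.inf'_le f hi
    linarith

lemma pmax_add_one (p : ι → ℝ) (x : ℝ) : pmaxF p (x + 1) = pmaxF p x + 1 := by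
  rw [pmaxF, pmaxF]
  have hcongr : (Finset.univ (α := ι)).sup' Finset.univ_nonempty
      (fun i => p i + ((⌊x + 1 - p i⌋ : ℤ) : ℝ)) =
      Finset.univ.sup' Finset.univ_nonempty
      (fun i => (p i + ((⌊x - p i⌋ : ℤ) : ℝ)) + 1) := by
    apply Finset.sup'_congr _ rfl
    intro i _
    have : x + 1 - p i = (x - p i) + 1 := by ring
    rw [this, Int.floor_add_one]
    push_cast
    ring
  rw [hcongr, sup'_add_const]

lemma pnext_add_one (p : ι → ℝ) (x : ℝ) : pnextF p (x + 1) = pnextF p x + 1 := by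
  rw [pnextF, pnextF]
  have hcongr : (Finset.univ (α := ι)).inf' Finset.univ_nonempty
      (fun i => p i + (((⌊x + 1 - p i⌋ : ℤ) : ℝ) + 1)) =
      Finset.univ.inf' Finset.univ_nonempty
      (fun i => (p i + (((⌊x - p i⌋ : ℤ) : ℝ) + 1)) + 1) := by
    apply Finset.inf'_congr _ rfl
    intro i _
    have : x + 1 - p i = (x - p i) + 1 := by ring
    rw [this, Int.floor_add_one]
    push_cast
    ring
  rw [hcongr, inf'_add_const]

lemma partner_pt_add_one (hc : Compat p q) {y : ℝ} (hy : IsPt p y) :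
    partner p q (y + 1) = partner p q y + 1 := by
  obtain ⟨i, m, hm⟩ := hy
  have hm1 : p i + ((m + 1 : ℤ) : ℝ) = y + 1 := by push_cast; linarith
  rw [partner_eq hc i (m + 1) hm1, partner_eq hc i m hm]
  push_cast
  ring

lemma eF_add_one (hc : Compat p q) (x : ℝ) : eF p q (x + 1) = eF p q x + 1 := by
  rw [eF, eF, pmax_add_one, pnext_add_one, partner_pt_add_one hc (isPt_pmax p x),
    partner_pt_add_one hc (isPt_pnext p x)]
  ring

lemma eF_comp (hc : Compat p q) (x : ℝ) : eF q p (eF p q x) = x := by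
  have hb := eF_bounds hc x
  have hqm_pt : IsPt q (partner p q (pmaxF p x)) := isPt_partner hc (isPt_pmax p x)
  have hqn_pt : IsPt q (partner p q (pnextF p x)) := isPt_partner hc (isPt_pnext p x)
  have claimA : pmaxF q (eF p q x) = partner p q (pmaxF p x) := by
    apply le_antisymm
    · by_contra hcon
      push_neg at hcon
      have hw_pt : IsPt q (pmaxF q (eF p q x)) := isPt_pmax q _
      have hw_le : pmaxF q (eF p q x) ≤ eF p q x := pmax_le q _
      have hw'_pt : IsPt p (partner q p (pmaxF q (eF p q x))) := isPt_partner hc.symm hw_pt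
      rcases point_split (x := x) hw'_pt with hle | hge
      · have h6 := partner_le_partner hc hw'_pt (isPt_pmax p x) hle
        rw [partner_roundtrip hc.symm hw_pt] at h6
        exact absurd h6 (not_le.2 hcon)
      · have h6 := partner_le_partner hc (isPt_pnext p x) hw'_pt hge
        rw [partner_roundtrip hc.symm hw_pt] at h6
        linarith [hb.2]
    · exact point_le_pmax hqm_pt hb.1
  have claimB : pnextF q (eF p q x) = partner p q (pnextF p x) := by
    apply le_antisymm
    · exact pnext_le_point hqn_pt hb.2
    · have hw_pt : IsPt q (pnextF q (eF p q x)) := isPt_pnext q _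
      have hw_gt : eF p q x < pnextF q (eF p q x) := lt_pnext q _
      have hw'_pt : IsPt p (partner q p (pnextF q (eF p q x))) := isPt_partner hc.symm hw_pt
      rcases point_split (x := x) hw'_pt with hle | hge
      · have h6 := partner_le_partner hc hw'_pt (isPt_pmax p x) hle
        rw [partner_roundtrip hc.symm hw_pt] at h6
        linarith [hb.1]
      · have h6 := partner_le_partner hc (isPt_pnext p x) hw'_pt hge
        rw [partner_roundtrip hc.symm hw_pt] at h6
        exact h6
  have expand : eF q p (eF p q x) = pmaxF p x +
      (eF p q x - partner p q (pmaxF p x)) * (pnextF p x - pmaxF p x) /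
        (partner p q (pnextF p x) - partner p q (pmaxF p x)) := by
    rw [eF, claimA, claimB, partner_roundtrip hc (isPt_pmax p x),
      partner_roundtrip hc (isPt_pnext p x)]
  have hΔp : pnextF p x - pmaxF p x ≠ 0 := ne_of_gt (sub_pos.2 (pmax_lt_pnext p x))
  have hΔq : partner p q (pnextF p x) - partner p q (pmaxF p x) ≠ 0 :=
    ne_of_gt (sub_pos.2 (qm_lt_qn hc x))
  rw [expand, eF]
  field_simp
  ring

/-- The interpolation element of `EqvGroup`. -/
noncomputable def gadget (p q : ι → ℝ) (hc : Compat p q) : EqvGroup :=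
  ⟨{ toFun := eF p q
     invFun := eF q p
     left_inv := eF_comp hc
     right_inv := eF_comp hc.symm },
   eF_strictMono hc, fun x => eF_add_one hc x⟩

lemma gadget_ap (hc : Compat p q) (i : ι) (m : ℤ) :
    ap (gadget p q hc) (p i + (m : ℝ)) = q i + m :=
  eF_point hc i m

lemma gadget_ap_inv (hc : Compat p q) (i : ι) (m : ℤ) :
    ap (gadget p q hc)⁻¹ (q i + (m : ℝ)) = p i + m := by
  have := gadget_ap hc i m
  rw [← this, ap_inv_ap]

end Gadget

section Realization

variable {α : Type}

/-- Cyclic reducedness of a word: the last letter is not the inverse of the first. -/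
def CycRed (L : List (α × Bool)) : Prop :=
  ∀ (h0 : 0 < L.length),
    ¬((L[L.length - 1]'(by omega)).1 = (L[0]'h0).1 ∧
      (L[L.length - 1]'(by omega)).2 = !(L[0]'h0).2)

theorem R1' [DecidableEq α] {L : List (α × Bool)} (hred : FreeGroup.reduce L = L)
    (i : ℕ) (hi : i < L.length) (hj : i + 1 < L.length)
    (h1 : (L[i]'hi).1 = (L[i+1]'hj).1) (h2 : (L[i+1]'hj).2 = !(L[i]'hi).2) : False := by
  apply FreeGroup.reduce.not (L₁ := L) (L₂ := L.take i) (L₃ := L.drop (i + 2))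
    (x := (L[i]'hi).1) (b := (L[i]'hi).2)
  rw [hred]
  have e1 : L = L.take i ++ L.drop i := (List.take_append_drop i L).symm
  have e2 : L.drop i = L[i] :: L.drop (i + 1) := List.drop_eq_getElem_cons hi
  have e3 : L.drop (i + 1) = L[i+1] :: L.drop (i + 2) := List.drop_eq_getElem_cons hj
  have e5 : L[i+1]'hj = ((L[i]'hi).1, !(L[i]'hi).2) := by
    have e0 : L[i+1]'hj = ((L[i+1]'hj).1, (L[i+1]'hj).2) := rfl
    rw [e0, ← h1, h2]
  conv_lhs => rw [e1, e2, e3, e5]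

theorem chain_of_reduced [DecidableEq α] {L : List (α × Bool)}
    (hred : FreeGroup.reduce L = L) :
    L.Chain' (fun a b => ¬(a.1 = b.1 ∧ b.2 = !a.2)) := by
  refine List.isChain_iff_getElem.2 ?_
  intro i h
  rintro ⟨h1, h2⟩
  exact R1' hred i (by omega) (by omega) h1 h2

theorem reduce_eq_self_of_chain' [DecidableEq α] :
    ∀ {L : List (α × Bool)}, List.Chain' (fun a b => ¬(a.1 = b.1 ∧ b.2 = !a.2)) L →
      FreeGroup.reduce L = L := by
  intro L
  induction L with
  | nil => intro _; rfl
  | cons x L ih =>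
    intro hch
    have htl := hch.tail
    rw [FreeGroup.reduce.cons, ih htl]
    cases L with
    | nil => rfl
    | cons y t =>
      have hxy := (List.isChain_cons_cons.1 hch).1
      simp only
      rw [if_neg]
      rintro ⟨hh1, hh2⟩
      exact hxy ⟨hh1, by simp [hh2]⟩

/-- Integer constraint abscissae. -/
def pint (L : List (α × Bool)) (k : Fin L.length) : ℤ :=
  (L.length : ℤ) - (k : ℕ) - (if (L.get k).2 then 1 else 0)

def qint (L : List (α × Bool)) (k : Fin L.length) : ℤ :=
  (L.length : ℤ) - (k : ℕ) - (if (L.get k).2 then 0 else 1)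

noncomputable def pval (L : List (α × Bool)) (k : Fin L.length) : ℝ :=
  (pint L k : ℝ) / (L.length : ℝ)

noncomputable def qval (L : List (α × Bool)) (k : Fin L.length) : ℝ :=
  (qint L k : ℝ) / (L.length : ℝ)

lemma m_split (m n : ℤ) (hn : 0 < n) :
    2 * n ≤ m * n ∨ m * n ≤ -2 * n ∨ m = -1 ∨ m = 0 ∨ m = 1 := by
  rcases le_or_gt 2 m with h | h
  · exact Or.inl (mul_le_mul_of_nonneg_right h hn.le)
  rcases le_or_gt m (-2) with h2 | h2
  · refine Or.inr (Or.inl ?_)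
    have := mul_le_mul_of_nonneg_right h2 hn.le
    linarith
  · right; right; omega

lemma div_ineq_lt {n : ℝ} (hn : 0 < n) (a b m : ℝ) : a / n + m < b / n ↔ a + m * n < b := by
  rw [div_add' _ _ _ (ne_of_gt hn), div_lt_div_iff_of_pos_right hn]

lemma div_ineq_eq {n : ℝ} (hn : 0 < n) (a b m : ℝ) : a / n + m = b / n ↔ a + m * n = b := by
  rw [div_add' _ _ _ (ne_of_gt hn), div_left_inj' (ne_of_gt hn)]

theorem int_core [DecidableEq α] {L : List (α × Bool)} (hred : FreeGroup.reduce L = L)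
    (hcyc : CycRed L) {k k' : Fin L.length} (hss : (L.get k).1 = (L.get k').1) (m : ℤ) :
    (pint L k + m * L.length < pint L k' → qint L k + m * L.length < qint L k') ∧
    (pint L k + m * L.length = pint L k' → qint L k + m * L.length = qint L k') := by
  have hkb := k.isLt
  have hk'b := k'.isLt
  have hn0 : 0 < L.length := by omega
  have hnZ : (0 : ℤ) < (L.length : ℤ) := by exact_mod_cast hn0
  have hne_adj : ∀ (i j : Fin L.length), (L.get i).1 = (L.get j).1 →
      (L.get j).2 = !(L.get i).2 → (i : ℕ) + 1 ≠ (j : ℕ) := by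
    intro i j hf hs hcontra
    simp only [List.get_eq_getElem] at hf hs
    have hj2 : (i : ℕ) + 1 < L.length := by omega
    have e : L[(i:ℕ)+1]'hj2 = L[(j:ℕ)]'j.isLt := by congr 1 <;> omega
    apply R1' hred (i : ℕ) i.isLt hj2
    · rw [e]; exact hf
    · rw [e]; exact hs
  have hne_wrap : ∀ (i j : Fin L.length), (L.get i).1 = (L.get j).1 →
      (L.get j).2 = !(L.get i).2 → ¬((i : ℕ) = 0 ∧ (j : ℕ) = L.length - 1) := by
    rintro i j hf hs ⟨hi0, hjl⟩
    simp only [List.get_eq_getElem] at hf hs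
    apply hcyc hn0
    have e1 : L[L.length - 1]'(by omega) = L[(j:ℕ)]'j.isLt := by congr 1; omega
    have e2 : L[0]'hn0 = L[(i:ℕ)]'i.isLt := by congr 1; omega
    constructor
    · rw [e1, e2, hf]
    · rw [e1, e2, hs]
  have hfin : ∀ (i j : Fin L.length), (i : ℕ) = (j : ℕ) → L.get i = L.get j := by
    intro i j hij
    congr 1
    exact Fin.ext hij
  have toE : ∀ (i : Fin L.length) (v : Bool), (L.get i).2 = v → (L[(i:ℕ)]'i.isLt).2 = v := by
    intro i v hv
    rw [← List.get_eq_getElem]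
    exact hv
  cases hbk : (L.get k).2 <;> cases hbk' : (L.get k').2
  -- case (false, false)
  · have ek : pint L k = (L.length:ℤ) - (k:ℕ) := by simp [pint, toE k false hbk]
    have ek' : pint L k' = (L.length:ℤ) - (k':ℕ) := by simp [pint, toE k' false hbk']
    have fk : qint L k = (L.length:ℤ) - (k:ℕ) - 1 := by simp [qint, toE k false hbk]
    have fk' : qint L k' = (L.length:ℤ) - (k':ℕ) - 1 := by simp [qint, toE k' false hbk']
    rw [ek, ek', fk, fk']
    constructor <;> intro h <;>
      (generalize hP : m * (L.length:ℤ) = P at h ⊢; omega)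
  -- case (false, true) : k negative, k' positive
  · have ek : pint L k = (L.length:ℤ) - (k:ℕ) := by simp [pint, toE k false hbk]
    have ek' : pint L k' = (L.length:ℤ) - (k':ℕ) - 1 := by simp [pint, toE k' true hbk']
    have fk : qint L k = (L.length:ℤ) - (k:ℕ) - 1 := by simp [qint, toE k false hbk]
    have fk' : qint L k' = (L.length:ℤ) - (k':ℕ) := by simp [qint, toE k' true hbk']
    have d1 : (k':ℕ) + 1 ≠ (k:ℕ) := hne_adj k' k hss.symm (by simp [toE k false hbk, toE k' true hbk'])
    have d3 : ¬((k:ℕ) = 0 ∧ (k':ℕ) = L.length - 1) :=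
      hne_wrap k k' hss (by simp [toE k false hbk, toE k' true hbk'])
    rw [ek, ek', fk, fk']
    rcases m_split m (L.length:ℤ) hnZ with hm | hm | hm | hm | hm
    · constructor <;> intro h <;>
        (generalize hP : m * (L.length:ℤ) = P at h hm ⊢; omega)
    · constructor <;> intro h <;>
        (generalize hP : m * (L.length:ℤ) = P at h hm ⊢; omega)
    · subst hm; constructor <;> intro h <;> omega
    · subst hm; constructor <;> intro h <;> omega
    · subst hm; constructor <;> intro h <;> omega
  -- case (true, false) : k positive, k' negative
  · have ek : pint L k = (L.length:ℤ) - (k:ℕ) - 1 := by simp [pint, toE k true hbk]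
    have ek' : pint L k' = (L.length:ℤ) - (k':ℕ) := by simp [pint, toE k' false hbk']
    have fk : qint L k = (L.length:ℤ) - (k:ℕ) := by simp [qint, toE k true hbk]
    have fk' : qint L k' = (L.length:ℤ) - (k':ℕ) - 1 := by simp [qint, toE k' false hbk']
    have d1 : (k':ℕ) + 1 ≠ (k:ℕ) := hne_adj k' k hss.symm (by simp [toE k true hbk, toE k' false hbk'])
    have d2 : (k:ℕ) + 1 ≠ (k':ℕ) := hne_adj k k' hss (by simp [toE k true hbk, toE k' false hbk'])
    have d3 : ¬((k:ℕ) = 0 ∧ (k':ℕ) = L.length - 1) :=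
      hne_wrap k k' hss (by simp [toE k true hbk, toE k' false hbk'])
    have d4 : ¬((k':ℕ) = 0 ∧ (k:ℕ) = L.length - 1) :=
      hne_wrap k' k hss.symm (by simp [toE k true hbk, toE k' false hbk'])
    have d5 : (k:ℕ) ≠ (k':ℕ) := by
      intro he
      have h6 := hfin k k' he
      rw [h6, hbk'] at hbk
      simp at hbk
    rw [ek, ek', fk, fk']
    rcases m_split m (L.length:ℤ) hnZ with hm | hm | hm | hm | hm
    · constructor <;> intro h <;>
        (generalize hP : m * (L.length:ℤ) = P at h hm ⊢; omega)
    · constructor <;> intro h <;>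
        (generalize hP : m * (L.length:ℤ) = P at h hm ⊢; omega)
    · subst hm; constructor <;> intro h <;> omega
    · subst hm; constructor <;> intro h <;> omega
    · subst hm; constructor <;> intro h <;> omega
  -- case (true, true)
  · have ek : pint L k = (L.length:ℤ) - (k:ℕ) - 1 := by simp [pint, toE k true hbk]
    have ek' : pint L k' = (L.length:ℤ) - (k':ℕ) - 1 := by simp [pint, toE k' true hbk']
    have fk : qint L k = (L.length:ℤ) - (k:ℕ) := by simp [qint, toE k true hbk]
    have fk' : qint L k' = (L.length:ℤ) - (k':ℕ) := by simp [qint, toE k' true hbk']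
    rw [ek, ek', fk, fk']
    constructor <;> intro h <;>
      (generalize hP : m * (L.length:ℤ) = P at h ⊢; omega)

theorem compat_word [DecidableEq α] (L : List (α × Bool)) (hred : FreeGroup.reduce L = L)
    (hcyc : CycRed L) (s : α) :
    Compat (ι := {k : Fin L.length // (L.get k).1 = s})
      (fun k => pval L k.1) (fun k => qval L k.1) := by
  rintro ⟨k, hk⟩ ⟨k', hk'⟩ m
  have hn0 : 0 < L.length := k.pos
  have hnR : (0:ℝ) < (L.length : ℝ) := by exact_mod_cast hn0
  have hss : (L.get k).1 = (L.get k').1 := by rw [hk, hk']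
  have hcore := int_core hred hcyc hss m
  simp only [pval, qval]
  constructor
  · intro h
    rw [div_ineq_lt hnR] at h ⊢
    have h2 : pint L k + m * (L.length:ℤ) < pint L k' := by exact_mod_cast h
    exact_mod_cast hcore.1 h2
  · intro h
    rw [div_ineq_eq hnR] at h ⊢
    have h2 : pint L k + m * (L.length:ℤ) = pint L k' := by exact_mod_cast h
    exact_mod_cast hcore.2 h2

open Classical in
/-- For each generator, the interpolating circle map prescribed by the word `L`. -/
noncomputable def letterMap [DecidableEq α] (L : List (α × Bool))
    (hred : FreeGroup.reduce L = L) (hcyc : CycRed L) : α → EqvGroup := fun s =>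
  if h : ∃ k : Fin L.length, (L.get k).1 = s then
    haveI : Nonempty {k : Fin L.length // (L.get k).1 = s} := ⟨⟨h.choose, h.choose_spec⟩⟩
    gadget (fun k : {k : Fin L.length // (L.get k).1 = s} => pval L k.1)
      (fun k => qval L k.1) (compat_word L hred hcyc s)
  else 1

lemma letter_ap [DecidableEq α] {L : List (α × Bool)}
    (hred : FreeGroup.reduce L = L) (hcyc : CycRed L) (t : ℕ) (ht : t < L.length) :
    ap (FreeGroup.lift (letterMap L hred hcyc) (FreeGroup.mk [L.get ⟨t, ht⟩]))
      (((L.length - (t+1) : ℕ) : ℝ) / L.length) = ((L.length - t : ℕ) : ℝ) / L.length := by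
  classical
  set x := L.get ⟨t, ht⟩ with hx
  have hex : ∃ k : Fin L.length, (L.get k).1 = x.1 := ⟨⟨t, ht⟩, rfl⟩
  haveI : Nonempty {k : Fin L.length // (L.get k).1 = x.1} := ⟨⟨⟨t, ht⟩, rfl⟩⟩
  have hmap : letterMap L hred hcyc x.1 =
      gadget (fun k : {k : Fin L.length // (L.get k).1 = x.1} => pval L k.1)
        (fun k => qval L k.1) (compat_word L hred hcyc x.1) := by
    rw [letterMap, dif_pos hex]
  have hbE : ∀ (v : Bool), x.2 = v → (L[t]'ht).2 = v := by
    intro v hv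
    have e : L.get ⟨t, ht⟩ = L[t]'ht := rfl
    rw [← e, ← hx]
    exact hv
  cases hb : x.2
  -- x.2 = false : inverse letter
  · have hxpair : x = (x.1, false) := by rw [← hb]
    have hof : FreeGroup.mk [x] = (FreeGroup.of x.1)⁻¹ := by
      have h1 : (FreeGroup.of x.1)⁻¹ = FreeGroup.mk (FreeGroup.invRev [(x.1, true)]) := by
        rw [← FreeGroup.inv_mk]
        rfl
      rw [h1]
      have h2 : FreeGroup.invRev [(x.1, true)] = [(x.1, false)] := by
        simp [FreeGroup.invRev]
      rw [h2, ← hxpair]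
    rw [hof, map_inv, FreeGroup.lift_apply_of, hmap]
    have hq : qval L ⟨t, ht⟩ = ((L.length - (t+1) : ℕ) : ℝ) / L.length := by
      have h3 : qint L ⟨t, ht⟩ = (L.length : ℤ) - t - 1 := by
        simp [qint, hbE false hb]
      rw [qval, h3]
      congr 1
      push_cast [Nat.cast_sub (by omega : t + 1 ≤ L.length)]
      ring
    have hp : pval L ⟨t, ht⟩ = ((L.length - t : ℕ) : ℝ) / L.length := by
      have h3 : pint L ⟨t, ht⟩ = (L.length : ℤ) - t := by
        simp [pint, hbE false hb]
      rw [pval, h3]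
      congr 1
      push_cast [Nat.cast_sub (by omega : t ≤ L.length)]
      ring
    have hgap := gadget_ap_inv (compat_word L hred hcyc x.1) ⟨⟨t, ht⟩, rfl⟩ 0
    simp only [Int.cast_zero, add_zero] at hgap
    rw [← hq, ← hp]
    exact hgap
  -- x.2 = true : positive letter
  · have hxpair : x = (x.1, true) := by rw [← hb]
    have hof : FreeGroup.mk [x] = FreeGroup.of x.1 := by
      rw [hxpair]; rfl
    rw [hof, FreeGroup.lift_apply_of, hmap]
    have hp : pval L ⟨t, ht⟩ = ((L.length - (t+1) : ℕ) : ℝ) / L.length := by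
      have h3 : pint L ⟨t, ht⟩ = (L.length : ℤ) - t - 1 := by
        simp [pint, hbE true hb]
      rw [pval, h3]
      congr 1
      push_cast [Nat.cast_sub (by omega : t + 1 ≤ L.length)]
      ring
    have hq : qval L ⟨t, ht⟩ = ((L.length - t : ℕ) : ℝ) / L.length := by
      have h3 : qint L ⟨t, ht⟩ = (L.length : ℤ) - t := by
        simp [qint, hbE true hb]
      rw [qval, h3]
      congr 1
      push_cast [Nat.cast_sub (by omega : t ≤ L.length)]
      ring
    have hgap := gadget_ap (compat_word L hred hcyc x.1) ⟨⟨t, ht⟩, rfl⟩ 0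
    simp only [Int.cast_zero, add_zero] at hgap
    rw [← hp, ← hq]
    exact hgap

/-- Cyclic reduction: every non-trivial element is a conjugate of a non-trivial
cyclically reduced element. -/
theorem exists_conj_cycred [DecidableEq α] :
    ∀ (n : ℕ) (z : FreeGroup α), z.toWord.length ≤ n → z ≠ 1 →
      ∃ (w c : FreeGroup α), z = w * c * w⁻¹ ∧ c ≠ 1 ∧ CycRed c.toWord := by
  intro n
  induction n with
  | zero =>
    intro z hlen hz
    exfalso
    apply hz
    rw [← FreeGroup.toWord_eq_nil_iff]
    exact List.eq_nil_of_length_eq_zero (Nat.le_zero.1 hlen)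
  | succ n ih =>
    intro z hlen hz
    by_cases hcyc : CycRed z.toWord
    · exact ⟨1, z, by simp, hz, hcyc⟩
    · rw [CycRed] at hcyc
      push_neg at hcyc
      obtain ⟨h0, hfst, hsnd⟩ := hcyc
      set L := z.toWord with hL
      simp only [← hL] at hfst hsnd
      have hne : L ≠ [] := by
        intro h
        rw [h] at h0
        simp at h0
      obtain ⟨x, t, hxt⟩ := List.exists_cons_of_ne_nil hne
      by_cases ht : t = []
      · exfalso
        have hL1 : L = [x] := by rw [hxt, ht]
        simp only [hL1] at hsnd
        simp at hsnd
      · -- main case : L.length ≥ 2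
        have hlen2 : 2 ≤ L.length := by
          rw [hxt]
          cases t with
          | nil => exact absurd rfl ht
          | cons y t' => simp only [List.length_cons]; omega
        set x := L[0]'h0 with hx0
        set y := L[L.length - 1]'(by omega) with hy0
        set M := (L.drop 1).take (L.length - 2) with hM
        have hfront : L = x :: L.drop 1 := by
          have := List.drop_eq_getElem_cons (l := L) h0
          simpa using this
        have hback : L.drop 1 = M ++ [y] := by
          have h1 : M ++ (L.drop 1).drop (L.length - 2) = L.drop 1 :=
            List.take_append_drop _ _
          have h2 : (L.drop 1).drop (L.length - 2) = L.drop (L.length - 1) := by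
            rw [List.drop_drop]
            congr 1
            omega
          have h3 : L.drop (L.length - 1) = [y] := by
            rw [List.drop_eq_getElem_cons (by omega : L.length - 1 < L.length)]
            have h4 : L.length - 1 + 1 = L.length := by omega
            rw [h4, List.drop_length]
          rw [← h1, h2, h3]
        have hLdec : L = x :: (M ++ [y]) := by rw [hfront, hback]
        have hyx : y = (x.1, !x.2) := by
          have e0 : y = (y.1, y.2) := rfl
          rw [e0, hfst, hsnd]
        have hz_eq : z = FreeGroup.mk [x] * FreeGroup.mk M * (FreeGroup.mk [x])⁻¹ := by
          have h1 : (FreeGroup.mk [x])⁻¹ = FreeGroup.mk [y] := by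
            rw [FreeGroup.inv_mk]
            congr 1
            rw [hyx]
            simp [FreeGroup.invRev]
          rw [h1, FreeGroup.mul_mk, FreeGroup.mul_mk]
          have h2 : ([x] ++ M) ++ [y] = x :: (M ++ [y]) := by simp
          rw [h2, ← hLdec, hL, FreeGroup.mk_toWord]
        have hredL : FreeGroup.reduce L = L := by rw [hL]; exact FreeGroup.reduce_toWord z
        have hchain := chain_of_reduced hredL
        have hMinf : M <:+: L := by
          have h1 : M <+: L.drop 1 := List.take_prefix _ _
          have h2 : L.drop 1 <:+ L := List.drop_suffix _ _
          exact h1.isInfix.trans h2.isInfix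
        have hMred : FreeGroup.reduce M = M := reduce_eq_self_of_chain' (hchain.infix hMinf)
        have hMword : (FreeGroup.mk M).toWord = M := by rw [FreeGroup.toWord_mk, hMred]
        have hMne : FreeGroup.mk M ≠ 1 := by
          intro hM1
          apply hz
          rw [hz_eq, hM1]
          group
        have hMlen : (FreeGroup.mk M).toWord.length ≤ n := by
          rw [hMword, hM]
          have h1 : (L.drop 1).length = L.length - 1 := by simp
          have h2 : ((L.drop 1).take (L.length - 2)).length = L.length - 2 := by
            rw [List.length_take, h1]
            omega
          omega
        obtain ⟨w', c, hzc, hc1, hcy⟩ := ih (FreeGroup.mk M) hMlen hMne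
        refine ⟨FreeGroup.mk [x] * w', c, ?_, hc1, hcy⟩
        rw [hz_eq, hzc]
        group

end Realization

/-- Realization: every non-trivial element of a free group admits an action on
the line translating some point by exactly `1`. -/
theorem exists_realization {α : Type} (z : FreeGroup α) (hz : z ≠ 1) :
    ∃ (ρ : FreeGroup α →* EqvGroup) (x₀ : ℝ), ap (ρ z) x₀ = x₀ + 1 := by
  letI := Classical.decEq α
  obtain ⟨w, c, hzw, hc1, hcyc⟩ := exists_conj_cycred z.toWord.length z le_rfl hz
  set L := c.toWord with hL
  have hredL : FreeGroup.reduce L = L := FreeGroup.reduce_toWord c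
  have hne : L ≠ [] := by
    rw [hL, ne_eq, FreeGroup.toWord_eq_nil_iff]
    exact hc1
  have hn0 : 0 < L.length := List.length_pos_iff.2 hne
  set ρ := FreeGroup.lift (letterMap L hredL hcyc) with hρ
  have heval : ∀ (n t : ℕ), t ≤ L.length → L.length - t = n →
      ap (ρ (FreeGroup.mk (L.drop t))) 0 = ((L.length - t : ℕ) : ℝ) / L.length := by
    intro n
    induction n with
    | zero =>
      intro t ht hn
      have ht' : t = L.length := by omega
      subst ht'
      rw [List.drop_length]
      have h1 : FreeGroup.mk ([] : List (α × Bool)) = 1 := rfl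
      rw [h1, map_one]
      simp
    | succ n ihn =>
      intro t ht hn
      have htlt : t < L.length := by omega
      have hdrop : L.drop t = L.get ⟨t, htlt⟩ :: L.drop (t+1) := by
        rw [List.drop_eq_getElem_cons htlt]
        simp [List.get_eq_getElem]
      have hsplit : FreeGroup.mk (L.drop t) =
          FreeGroup.mk [L.get ⟨t, htlt⟩] * FreeGroup.mk (L.drop (t+1)) := by
        rw [FreeGroup.mul_mk, hdrop]
        rfl
      rw [hsplit, map_mul, ap_mul, ihn (t+1) (by omega) (by omega)]
      exact letter_ap hredL hcyc t htlt
  have heval0 : ap (ρ c) 0 = 1 := by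
    have h1 := heval L.length 0 (by omega) (by omega)
    rw [List.drop_zero, hL, FreeGroup.mk_toWord] at h1
    rw [h1, Nat.sub_zero]
    apply div_self
    have h2 : (0:ℝ) < ((c.toWord.length : ℕ) : ℝ) := by
      rw [← hL]
      exact_mod_cast hn0
    exact ne_of_gt h2
  refine ⟨ρ, ap (ρ w) 0, ?_⟩
  rw [hzw, map_mul, map_mul, map_inv, ap_mul, ap_mul, ap_inv_ap, heval0]
  have h2 : (1 : ℝ) = 0 + 1 := by ring
  rw [h2, ap_add_one]
  ring


/-- In a free group, a non-trivial product of two commutators is never a fourth power. -/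
theorem no_fourth_power_product_of_two_commutators {α : Type}
    (a b c d z : FreeGroup α)
    (h : a⁻¹ * b⁻¹ * a * b * (c⁻¹ * d⁻¹ * c * d) ≠ 1) :
    a⁻¹ * b⁻¹ * a * b * (c⁻¹ * d⁻¹ * c * d) ≠ z ^ 4 := by
  intro heq
  have hz : z ≠ 1 := by
    rintro rfl
    simp at heq
    exact h heq
  obtain ⟨ρ, x₀, hx₀⟩ := exists_realization z hz
  have hpow : ∀ n : ℕ, ap (ρ z ^ n) x₀ = x₀ + n := by
    intro n
    induction n with
    | zero => simp
    | succ n ih =>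
      rw [pow_succ, ap_mul, hx₀, ap_add_one, ih]
      push_cast; ring
  have h4 : ap (ρ z ^ 4) x₀ = x₀ + 4 := by
    have := hpow 4
    push_cast at this
    exact this
  set C₁ := (ρ a)⁻¹ * (ρ b)⁻¹ * ρ a * ρ b with hC₁
  set C₂ := (ρ c)⁻¹ * (ρ d)⁻¹ * ρ c * ρ d with hC₂
  have hsplit : C₁ * C₂ = ρ z ^ 4 := by
    rw [hC₁, hC₂, ← map_inv, ← map_inv, ← map_inv, ← map_inv]
    rw [← map_mul, ← map_mul, ← map_mul, ← map_mul, ← map_mul, ← map_mul, ← map_mul]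
    rw [heq, map_pow]
  obtain ⟨x, hx⟩ := prod_small C₁ C₂
    (commutator_exists_small (ρ a) (ρ b)) (commutator_exists_small (ρ c) (ρ d))
  rw [hsplit] at hx
  have := ap_big (ρ z ^ 4) x₀ h4 x
  linarith
end
end

section
/- A free product of locally indicable groups is locally indicable. -/
open Monoid

/-- A group is locally indicable if every non-trivial finitely generated subgroup
surjects onto `ℤ`. -/
def LocallyIndicable (G : Type) [Group G] : Prop :=
  ∀ H : Subgroup G, H ≠ ⊥ → H.FG →
    ∃ f : H →* Multiplicative ℤ, Function.Surjective f

section Aux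

open Function Pointwise

set_option linter.unusedSectionVars false

namespace CoprodLocIndAux

open Monoid.CoprodI Monoid.CoprodI.Word

/-! ### Generic word lemmas -/

section WordLemmas

variable {ι : Type} [DecidableEq ι] {M : ι → Type} [∀ i, Group (M i)] [∀ i, DecidableEq (M i)]

theorem toList_of_smul {i : ι} {m : M i} (hm : m ≠ 1) (w : Word M) (hw : w.fstIdx ≠ some i) :
    (CoprodI.of m • w).toList = ⟨i, m⟩ :: w.toList := by
  rw [← cons_eq_smul (h1 := hw) (h2 := hm)]
  simp [cons]

theorem exists_cons (w : Word M) {i : ι} {m' : M i} {t} (h : w.toList = ⟨i, m'⟩ :: t) :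
    ∃ (w' : Word M) (h1 : w'.fstIdx ≠ some i) (h2 : m' ≠ 1),
      w = cons m' w' h1 h2 ∧ w'.toList = t := by
  have hc := w.chain_ne
  rw [h] at hc
  rw [List.isChain_cons] at hc
  refine ⟨⟨t, ?_, hc.2⟩, ?_, ?_, ?_, rfl⟩
  · intro l hl
    exact w.ne_one l (h ▸ List.mem_cons_of_mem _ hl)
  · rw [fstIdx_ne_iff]
    intro l hl
    exact hc.1 l hl
  · exact w.ne_one ⟨i, m'⟩ (h ▸ List.mem_cons_self)
  · apply Word.ext
    simp [cons, h]

theorem smul_merge {i : ι} (m m' : M i) (w' : Word M) (h1 : w'.fstIdx ≠ some i) (h2 : m' ≠ 1) :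
    CoprodI.of m • (cons m' w' h1 h2 : Word M) = CoprodI.of (m * m') • w' := by
  rw [cons_eq_smul, ← mul_smul, ← map_mul]

theorem fstIdx_eq_some {w : Word M} {i : ι} {m : M i} {t} (h : w.toList = ⟨i, m⟩ :: t) :
    w.fstIdx = some i := by
  simp [fstIdx, h]

/-- The key ping-pong computation. -/
theorem commutator_smul {i j : ι} (hij : i ≠ j) {a : M i} {b : M j} (ha : a ≠ 1) (hb : b ≠ 1)
    (w : Word M) (hw : ¬ ∃ t, w.toList = ⟨j, b⟩ :: ⟨i, a⟩ :: t) :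
    ∃ t, ((CoprodI.of a * CoprodI.of b * (CoprodI.of a)⁻¹ * (CoprodI.of b)⁻¹) • w).toList
      = ⟨i, a⟩ :: ⟨j, b⟩ :: t := by
  have key : ∀ v : Word M, v.fstIdx ≠ some j →
      ∃ t, ((CoprodI.of a * CoprodI.of b) • v).toList = ⟨i, a⟩ :: ⟨j, b⟩ :: t := by
    intro v hv
    rw [mul_smul]
    have h1 := toList_of_smul hb v hv
    have h2 : (CoprodI.of b • v).fstIdx ≠ some i := by
      rw [fstIdx_eq_some h1]
      simpa using Ne.symm hij
    exact ⟨v.toList, by rw [toList_of_smul ha _ h2, h1]⟩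
  have hsplit : (CoprodI.of a * CoprodI.of b * (CoprodI.of a)⁻¹ * (CoprodI.of b)⁻¹) • w
      = (CoprodI.of a * CoprodI.of b) • (CoprodI.of a⁻¹ • (CoprodI.of b⁻¹ • w)) := by
    rw [← mul_smul, ← mul_smul, map_inv, map_inv]
  rw [hsplit]
  by_cases hj : w.fstIdx = some j
  · obtain ⟨⟨j', b₁⟩, t0, hl⟩ : ∃ l t0, w.toList = l :: t0 := by
      rcases hlt : w.toList with _ | ⟨l, t0⟩
      · rw [fstIdx, hlt] at hj; simp at hj
      · exact ⟨l, t0, rfl⟩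
    have : j' = j := by rw [fstIdx, hl] at hj; simpa using hj
    subst this
    obtain ⟨w', hw1, hw2, rfl, ht⟩ := exists_cons w hl
    rw [smul_merge]
    by_cases hb1 : b⁻¹ * b₁ = 1
    · have hb₁ : b₁ = b := by
        have := hb1
        rwa [inv_mul_eq_one, eq_comm] at this
      subst hb₁
      rw [hb1, map_one, one_smul]
      by_cases hi : w'.fstIdx = some i
      · obtain ⟨⟨i', a₁⟩, t1, hl1⟩ : ∃ l t1, w'.toList = l :: t1 := by
          rcases hlt : w'.toList with _ | ⟨l, t1⟩
          · rw [fstIdx, hlt] at hi; simp at hi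
          · exact ⟨l, t1, rfl⟩
        have : i' = i := by rw [fstIdx, hl1] at hi; simpa using hi
        subst this
        have ha₁ : a₁ ≠ a := by
          intro h
          subst h
          exact hw ⟨t1, by rw [cons_toList, hl1]⟩
        obtain ⟨w'', hw1', hw2', rfl, ht'⟩ := exists_cons w' hl1
        rw [smul_merge]
        have hne : a⁻¹ * a₁ ≠ 1 := by
          rw [Ne, inv_mul_eq_one, eq_comm]; exact ha₁
        apply key
        rw [fstIdx_eq_some (toList_of_smul hne _ hw1')]
        simpa using hij
      · apply key
        rw [fstIdx_eq_some (toList_of_smul (inv_ne_one.2 ha) _ hi)]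
        simpa using hij
    · have h1 := toList_of_smul hb1 w' hw1
      have h2 : (CoprodI.of (b⁻¹ * b₁) • w').fstIdx ≠ some i := by
        rw [fstIdx_eq_some h1]; simpa using Ne.symm hij
      apply key
      rw [fstIdx_eq_some (toList_of_smul (inv_ne_one.2 ha) _ h2)]
      simpa using hij
  · have h1 := toList_of_smul (inv_ne_one.2 hb) w hj
    have h2 : (CoprodI.of b⁻¹ • w).fstIdx ≠ some i := by
      rw [fstIdx_eq_some h1]; simpa using Ne.symm hij
    apply key
    rw [fstIdx_eq_some (toList_of_smul (inv_ne_one.2 ha) _ h2)]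
    simpa using hij

end WordLemmas

/-! ### Free group lift injectivity via ping-pong, all cardinality cases -/

theorem lift_injective_cases {ι G α : Type} [Group G] [MulAction G α] (a : ι → G)
    (X Y : ι → Set α) (p : α) (hp : ∀ i, p ∉ Y i ∧ p ∉ X i)
    (hXnonempty : ∀ i, (X i).Nonempty)
    (hXdisj : Pairwise (Disjoint on X))
    (hYdisj : Pairwise (Disjoint on Y))
    (hXYdisj : ∀ i j, Disjoint (X i) (Y j))
    (hX : ∀ i, a i • (Y i)ᶜ ⊆ X i)
    (hY : ∀ i, a⁻¹ i • (X i)ᶜ ⊆ Y i) :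
    Function.Injective (FreeGroup.lift a) := by
  rcases isEmpty_or_nonempty ι with hι | hι
  · intro x y _
    suffices h : ∀ z : FreeGroup ι, z = 1 by rw [h x, h y]
    intro z
    induction z using FreeGroup.induction_on with
    | C1 => rfl
    | of x => exact isEmptyElim x
    | inv_of x _ => simp_all
    | mul x y hx hy => rw [hx, hy, one_mul]
  rcases subsingleton_or_nontrivial ι with hs | hnt
  · obtain ⟨i0⟩ := hι
    have hpow : ∀ n : ℕ, (a i0) ^ (n + 1) • p ∈ X i0 := by
      intro n
      induction n with
      | zero =>
        rw [pow_one]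
        exact hX i0 (Set.smul_mem_smul_set (hp i0).1)
      | succ n ih =>
        rw [pow_succ', mul_smul]
        apply hX i0
        exact Set.smul_mem_smul_set ((hXYdisj i0 i0).subset_compl_right ih)
    have hne : ∀ n : ℕ, (a i0) ^ (n + 1) ≠ 1 := by
      intro n h
      have := hpow n
      rw [h, one_smul] at this
      exact (hp i0).2 this
    have hz' : ∀ z : FreeGroup ι, ∃ m : ℤ, z = FreeGroup.of i0 ^ m := by
      intro z
      induction z using FreeGroup.induction_on with
      | C1 => exact ⟨0, by simp⟩
      | of x => exact ⟨1, by rw [Subsingleton.elim x i0, zpow_one]⟩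
      | inv_of x ih =>
        obtain ⟨m, hm⟩ := ih
        exact ⟨-m, by rw [hm, zpow_neg]⟩
      | mul x y hx hy =>
        obtain ⟨m, hm⟩ := hx
        obtain ⟨k, hk⟩ := hy
        exact ⟨m + k, by rw [hm, hk, zpow_add]⟩
    rw [injective_iff_map_eq_one]
    intro z hz
    obtain ⟨m, rfl⟩ := hz' z
    rw [map_zpow, FreeGroup.lift_apply_of] at hz
    obtain ⟨n, rfl | rfl⟩ := Int.eq_nat_or_neg m
    · rw [zpow_natCast] at hz
      rcases n with _ | k
      · simp
      · exact absurd hz (hne k)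
    · rw [zpow_neg, inv_eq_one, zpow_natCast] at hz
      rcases n with _ | k
      · simp
      · exact absurd hz (hne k)
  · exact FreeGroup.injective_lift_of_ping_pong a X Y hXnonempty hXdisj hYdisj hXYdisj hX hY

/-! ### Conjugation and closures -/

theorem conj_mem_closure {G : Type} [Group G] {S : Set G} {x : G}
    (hx : ∀ s ∈ S, x * s * x⁻¹ ∈ Subgroup.closure S) :
    ∀ n ∈ Subgroup.closure S, x * n * x⁻¹ ∈ Subgroup.closure S := by
  intro n hn
  induction hn using Subgroup.closure_induction with
  | mem s hs => exact hx s hs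
  | one => simpa using Subgroup.one_mem _
  | mul u v hu hv ihu ihv =>
    have h : x * (u * v) * x⁻¹ = (x * u * x⁻¹) * (x * v * x⁻¹) := by group
    rw [h]; exact mul_mem ihu ihv
  | inv u hu ihu =>
    have h : x * u⁻¹ * x⁻¹ = (x * u * x⁻¹)⁻¹ := by group
    rw [h]; exact inv_mem ihu

/-! ### The concrete setting -/

variable (A B : Type) [Group A] [Group B]

/-- The two-element family of groups. -/
def Fam : Bool → Type := fun b => cond b A B

instance : ∀ b, Group (Fam A B b)
  | true => ‹Group A›
  | false => ‹Group B›

noncomputable instance : ∀ b, DecidableEq (Fam A B b) := fun _ => Classical.decEq _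

def ofA : A →* CoprodI (Fam A B) := CoprodI.of (M := Fam A B) (i := true)

def ofB : B →* CoprodI (Fam A B) := CoprodI.of (M := Fam A B) (i := false)

def eHom : Coprod A B →* CoprodI (Fam A B) := Coprod.lift (ofA A B) (ofB A B)

def eInv : CoprodI (Fam A B) →* Coprod A B :=
  CoprodI.lift fun b => match b with
    | true => (Coprod.inl : A →* Coprod A B)
    | false => (Coprod.inr : B →* Coprod A B)

theorem eInv_eHom : (eInv A B).comp (eHom A B) = MonoidHom.id _ := by
  apply Coprod.hom_ext <;> ext x
  · show eInv A B (eHom A B (Coprod.inl x)) = Coprod.inl x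
    rw [show eHom A B (Coprod.inl x) = ofA A B x from rfl]
    exact CoprodI.lift_of _ _
  · show eInv A B (eHom A B (Coprod.inr x)) = Coprod.inr x
    rw [show eHom A B (Coprod.inr x) = ofB A B x from rfl]
    exact CoprodI.lift_of _ _

theorem eHom_eInv : (eHom A B).comp (eInv A B) = MonoidHom.id _ := by
  apply CoprodI.ext_hom
  intro i
  cases i <;> ext x
  · show eHom A B (eInv A B (CoprodI.of x)) = CoprodI.of x
    rw [show (eInv A B) (CoprodI.of x) = Coprod.inr x from CoprodI.lift_of _ _]
    rfl
  · show eHom A B (eInv A B (CoprodI.of x)) = CoprodI.of x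
    rw [show (eInv A B) (CoprodI.of x) = Coprod.inl x from CoprodI.lift_of _ _]
    rfl

/-- `Coprod A B` is isomorphic to the indexed free product. -/
noncomputable def eEquiv : Coprod A B ≃* CoprodI (Fam A B) :=
  MonoidHom.toMulEquiv (eHom A B) (eInv A B) (eInv_eHom A B) (eHom_eInv A B)

def projAB : CoprodI (Fam A B) →* A × B :=
  CoprodI.lift fun b => match b with
    | true => MonoidHom.inl A B
    | false => MonoidHom.inr A B

variable {A B}

def com (a : A) (b : B) : CoprodI (Fam A B) :=
  ofA A B a * ofB A B b * (ofA A B a)⁻¹ * (ofB A B b)⁻¹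

theorem projAB_ofA (a : A) : projAB A B (ofA A B a) = (a, 1) :=
  CoprodI.lift_of _ _

theorem projAB_ofB (b : B) : projAB A B (ofB A B b) = (1, b) :=
  CoprodI.lift_of _ _

theorem com_mem_ker (a : A) (b : B) : com a b ∈ (projAB A B).ker := by
  rw [MonoidHom.mem_ker, com, map_mul, map_mul, map_mul, map_inv, map_inv,
    projAB_ofA, projAB_ofB]
  ext <;> simp

variable (A B) in
/-- The set of commutators. -/
def S : Set (CoprodI (Fam A B)) := {x | ∃ a b, x = com a b}

theorem conj_ofA (a' a : A) (b : B) :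
    ofA A B a' * com a b * (ofA A B a')⁻¹ = com (a' * a) b * (com a' b)⁻¹ := by
  simp only [com, map_mul]
  group

theorem conj_ofB (b' : B) (a : A) (b : B) :
    ofB A B b' * com a b * (ofB A B b')⁻¹ = (com a b')⁻¹ * com a (b' * b) := by
  simp only [com, map_mul]
  group

theorem closure_S_normal : (Subgroup.closure (S A B)).Normal := by
  constructor
  intro n hn g
  have main : ∀ g : CoprodI (Fam A B),
      (∀ n ∈ Subgroup.closure (S A B), g * n * g⁻¹ ∈ Subgroup.closure (S A B)) ∧
      (∀ n ∈ Subgroup.closure (S A B), g⁻¹ * n * g ∈ Subgroup.closure (S A B)) := by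
    intro g
    induction g using CoprodI.induction_on with
    | one => constructor <;> intro n hn <;> simpa using hn
    | of i m =>
      have hgen : ∀ (x : CoprodI (Fam A B)),
          (∀ s ∈ S A B, x * s * x⁻¹ ∈ Subgroup.closure (S A B)) →
          ∀ n ∈ Subgroup.closure (S A B), x * n * x⁻¹ ∈ Subgroup.closure (S A B) :=
        fun x hx => conj_mem_closure hx
      cases i with
      | true =>
        constructor
        · apply hgen
          rintro s ⟨a, b, rfl⟩
          rw [show (CoprodI.of m : CoprodI (Fam A B)) = ofA A B m from rfl]
          refine (congrArg (· ∈ Subgroup.closure (S A B)) (conj_ofA (A := A) (B := B) m a b)).mpr ?_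
          exact mul_mem (Subgroup.subset_closure ⟨_, _, rfl⟩)
            (inv_mem (Subgroup.subset_closure ⟨_, _, rfl⟩))
        · have : ((CoprodI.of m : CoprodI (Fam A B)))⁻¹ = ofA A B m⁻¹ := by
            rw [← map_inv]; rfl
          rw [this]
          intro n hn
          have := hgen (ofA A B m⁻¹) ?_ n hn
          · convert this using 2
            exact ((congrArg Inv.inv (map_inv (ofA A B) m)).trans (inv_inv _)).symm
          · rintro s ⟨a, b, rfl⟩
            rw [conj_ofA]
            exact mul_mem (Subgroup.subset_closure ⟨_, _, rfl⟩)
              (inv_mem (Subgroup.subset_closure ⟨_, _, rfl⟩))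
      | false =>
        constructor
        · apply hgen
          rintro s ⟨a, b, rfl⟩
          rw [show (CoprodI.of m : CoprodI (Fam A B)) = ofB A B m from rfl]
          refine (congrArg (· ∈ Subgroup.closure (S A B)) (conj_ofB (A := A) (B := B) m a b)).mpr ?_
          exact mul_mem (inv_mem (Subgroup.subset_closure ⟨_, _, rfl⟩))
            (Subgroup.subset_closure ⟨_, _, rfl⟩)
        · have : ((CoprodI.of m : CoprodI (Fam A B)))⁻¹ = ofB A B m⁻¹ := by
            rw [← map_inv]; rfl
          rw [this]
          intro n hn
          have := hgen (ofB A B m⁻¹) ?_ n hn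
          · convert this using 2
            exact ((congrArg Inv.inv (map_inv (ofB A B) m)).trans (inv_inv _)).symm
          · rintro s ⟨a, b, rfl⟩
            rw [conj_ofB]
            exact mul_mem (inv_mem (Subgroup.subset_closure ⟨_, _, rfl⟩))
              (Subgroup.subset_closure ⟨_, _, rfl⟩)
    | mul x y hx hy =>
      constructor
      · intro n hn
        have h : x * y * n * (x * y)⁻¹ = x * (y * n * y⁻¹) * x⁻¹ := by group
        rw [h]
        exact hx.1 _ (hy.1 n hn)
      · intro n hn
        have h : (x * y)⁻¹ * n * (x * y) = y⁻¹ * (x⁻¹ * n * x) * y := by group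
        rw [h]
        exact hy.2 _ (hx.2 n hn)
  exact (main g).1 n hn

theorem ker_eq_closure_S : (projAB A B).ker = Subgroup.closure (S A B) := by
  haveI hN : (Subgroup.closure (S A B)).Normal := closure_S_normal
  apply le_antisymm
  · -- ker ≤ closure S via the quotient
    set N := Subgroup.closure (S A B)
    set π := QuotientGroup.mk' N with hπ
    have hcomm : ∀ (a : A) (b : B), Commute (π (ofA A B a)) (π (ofB A B b)) := by
      intro a b
      rw [← commutatorElement_eq_one_iff_commute]
      have : π (com a b) = 1 := by
        rw [QuotientGroup.mk'_apply, QuotientGroup.eq_one_iff]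
        exact Subgroup.subset_closure ⟨a, b, rfl⟩
      simpa [com, commutatorElement_def, map_mul, map_inv] using this
    set ψ := MonoidHom.noncommCoprod (π.comp (ofA A B)) (π.comp (ofB A B)) hcomm with hψdef
    have hψ : ψ.comp (projAB A B) = π := by
      apply CoprodI.ext_hom
      intro i
      cases i <;> ext x
      · show ψ (projAB A B (CoprodI.of x)) = π (CoprodI.of x)
        rw [show projAB A B (CoprodI.of x) = MonoidHom.inr A B x from CoprodI.lift_of _ _]
        show π (ofA A B 1) * π (ofB A B x) = π (CoprodI.of x)
        rw [map_one, map_one, one_mul]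
        rfl
      · show ψ (projAB A B (CoprodI.of x)) = π (CoprodI.of x)
        rw [show projAB A B (CoprodI.of x) = MonoidHom.inl A B x from CoprodI.lift_of _ _]
        show π (ofA A B x) * π (ofB A B 1) = π (CoprodI.of x)
        rw [map_one, map_one, mul_one]
        rfl
    intro x hx
    have h1 : π x = 1 := by
      rw [← hψ]
      simp only [MonoidHom.comp_apply]
      rw [MonoidHom.mem_ker.mp hx, map_one]
    rwa [QuotientGroup.mk'_apply, QuotientGroup.eq_one_iff] at h1
  · rw [Subgroup.closure_le]
    rintro x ⟨a, b, rfl⟩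
    exact com_mem_ker a b


variable (A B)

/-- Index type for the free basis of the kernel. -/
def Idx : Type := {a : A // a ≠ 1} × {b : B // b ≠ 1}

def cgen : Idx A B → CoprodI (Fam A B) := fun p => com p.1.1 p.2.1

theorem closure_range_cgen :
    Subgroup.closure (Set.range (cgen A B)) = Subgroup.closure (S A B) := by
  apply le_antisymm
  · apply Subgroup.closure_mono
    rintro x ⟨p, rfl⟩
    exact ⟨p.1.1, p.2.1, rfl⟩
  · rw [Subgroup.closure_le]
    rintro x ⟨a, b, rfl⟩
    by_cases ha : a = 1
    · subst ha
      have h1 : com (1 : A) b = 1 := by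
        rw [com, map_one]
        group
      rw [h1]
      exact one_mem _
    by_cases hb : b = 1
    · subst hb
      have h1 : com a (1 : B) = 1 := by
        rw [com, map_one]
        group
      rw [h1]
      exact one_mem _
    exact Subgroup.subset_closure ⟨(⟨a, ha⟩, ⟨b, hb⟩), rfl⟩

/-- The ping-pong set `X p`. -/
def XS (p : Idx A B) : Set (Word (Fam A B)) :=
  {w | ∃ t, w.toList = ⟨true, p.1.1⟩ :: ⟨false, p.2.1⟩ :: t}

/-- The ping-pong set `Y p`. -/
def YS (p : Idx A B) : Set (Word (Fam A B)) :=
  {w | ∃ t, w.toList = ⟨false, p.2.1⟩ :: ⟨true, p.1.1⟩ :: t}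

/-- A witness word in `X p`. -/
def xword (p : Idx A B) : Word (Fam A B) where
  toList := [⟨true, p.1.1⟩, ⟨false, p.2.1⟩]
  ne_one := by
    intro l hl
    simp only [List.mem_cons, List.not_mem_nil, or_false, List.mem_singleton] at hl
    rcases hl with rfl | rfl
    · exact p.1.2
    · exact p.2.2
  chain_ne := by
    refine List.isChain_cons_cons.2 ⟨?_, List.isChain_singleton _⟩
    simp

theorem idx_eq_of_letters {p q : Idx A B} (h1 : p.1.1 = q.1.1) (h2 : p.2.1 = q.2.1) : p = q :=
  Prod.ext (Subtype.ext h1) (Subtype.ext h2)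

theorem lift_cgen_injective : Function.Injective (FreeGroup.lift (cgen A B)) := by
  apply lift_injective_cases (cgen A B) (XS A B) (YS A B) Word.empty
  · intro p
    constructor
    · rintro ⟨t, ht⟩
      simp [Word.empty] at ht
    · rintro ⟨t, ht⟩
      simp [Word.empty] at ht
  · intro p
    exact ⟨xword A B p, [], rfl⟩
  · intro p q hpq
    rw [Function.onFun, Set.disjoint_left]
    rintro w ⟨t, ht⟩ ⟨t', ht'⟩
    rw [ht] at ht'
    simp only [List.cons.injEq, Sigma.mk.inj_iff, heq_eq_eq, true_and] at ht'
    exact hpq (idx_eq_of_letters A B (eq_of_heq (Sigma.mk.inj ht'.1).2) (eq_of_heq (Sigma.mk.inj ht'.2.1).2))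
  · intro p q hpq
    rw [Function.onFun, Set.disjoint_left]
    rintro w ⟨t, ht⟩ ⟨t', ht'⟩
    rw [ht] at ht'
    simp only [List.cons.injEq, Sigma.mk.inj_iff, heq_eq_eq, true_and] at ht'
    exact hpq (idx_eq_of_letters A B (eq_of_heq (Sigma.mk.inj ht'.2.1).2) (eq_of_heq (Sigma.mk.inj ht'.1).2))
  · intro p q
    rw [Set.disjoint_left]
    rintro w ⟨t, ht⟩ ⟨t', ht'⟩
    rw [ht] at ht'
    simp at ht'
    exact absurd (congrArg Sigma.fst ht'.1) (by simp)
  · rintro p _ ⟨v, hv, rfl⟩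
    exact commutator_smul (by simp : (true : Bool) ≠ false) p.1.2 p.2.2 v hv
  · rintro p _ ⟨v, hv, rfl⟩
    have hinv : (cgen A B p)⁻¹ =
        ofB A B p.2.1 * ofA A B p.1.1 * (ofB A B p.2.1)⁻¹ * (ofA A B p.1.1)⁻¹ := by
      show (com p.1.1 p.2.1)⁻¹ = _
      rw [com]
      group
    show (cgen A B p)⁻¹ • v ∈ YS A B p
    rw [hinv]
    exact commutator_smul (by simp : (false : Bool) ≠ true) p.2.2 p.1.2 v hv

theorem isFreeGroup_ker_projAB : IsFreeGroup (projAB A B).ker := by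
  have hrange : (FreeGroup.lift (cgen A B)).range = (projAB A B).ker := by
    rw [FreeGroup.range_lift_eq_closure, closure_range_cgen, ← ker_eq_closure_S]
  exact IsFreeGroup.ofMulEquiv
    ((MonoidHom.ofInjective (lift_cgen_injective A B)).trans (MulEquiv.subgroupCongr hrange))

theorem eHom_injective : Function.Injective (eHom A B) := by
  intro x y h
  have hx := DFunLike.congr_fun (eInv_eHom A B) x
  have hy := DFunLike.congr_fun (eInv_eHom A B) y
  simp only [MonoidHom.comp_apply, MonoidHom.id_apply] at hx hy
  rw [← hx, ← hy, h]

theorem eHom_surjective : Function.Surjective (eHom A B) := by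
  intro x
  refine ⟨eInv A B x, ?_⟩
  have := DFunLike.congr_fun (eHom_eInv A B) x
  simpa using this

theorem toProd_eq : (projAB A B).comp (eHom A B) = (Coprod.toProd : Coprod A B →* A × B) := by
  refine Coprod.hom_ext (MonoidHom.ext fun x => ?_) (MonoidHom.ext fun x => ?_)
  · show projAB A B (ofA A B x) = Coprod.toProd (Coprod.inl x)
    rw [projAB_ofA, Coprod.toProd_apply_inl]
  · show projAB A B (ofB A B x) = Coprod.toProd (Coprod.inr x)
    rw [projAB_ofB, Coprod.toProd_apply_inr]

theorem isFreeGroup_ker_toProd :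
    IsFreeGroup (MonoidHom.ker (Coprod.toProd : Coprod A B →* A × B)) := by
  have hker : (Coprod.toProd : Coprod A B →* A × B).ker
      = Subgroup.comap (eHom A B) (projAB A B).ker := by
    rw [MonoidHom.comap_ker, toProd_eq]
  have hmap : Subgroup.map (eHom A B) (Coprod.toProd : Coprod A B →* A × B).ker
      = (projAB A B).ker := by
    rw [hker, Subgroup.map_comap_eq_self_of_surjective (eHom_surjective A B)]
  haveI := isFreeGroup_ker_projAB A B
  have e2 : (MonoidHom.ker (Coprod.toProd : Coprod A B →* A × B)) ≃* (projAB A B).ker :=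
    (Subgroup.equivMapOfInjective _ _ (eHom_injective A B)).trans (MulEquiv.subgroupCongr hmap)
  haveI : IsFreeGroup ((projAB A B).ker) := isFreeGroup_ker_projAB A B
  exact IsFreeGroup.ofMulEquiv e2.symm


/-! ### Final assembly -/

theorem exists_surj_of_isFreeGroup (F : Type) [Group F] [IsFreeGroup F] [Nontrivial F] :
    ∃ f : F →* Multiplicative ℤ, Function.Surjective f := by
  have hne : Nonempty (IsFreeGroup.Generators F) := by
    by_contra h
    rw [not_nonempty_iff] at h
    have hsub : ∀ z : FreeGroup (IsFreeGroup.Generators F), z = 1 := by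
      intro z
      induction z using FreeGroup.induction_on with
      | C1 => rfl
      | of x => exact isEmptyElim x
      | inv_of x _ => simp_all
      | mul x y hx hy => rw [hx, hy, one_mul]
    obtain ⟨x, y, hxy⟩ := exists_pair_ne F
    apply hxy
    set e := (IsFreeGroup.basis F).repr
    have : e x = e y := by rw [hsub (e x), hsub (e y)]
    exact e.injective this
  obtain ⟨x0⟩ := hne
  refine ⟨IsFreeGroup.lift (fun _ => Multiplicative.ofAdd (1 : ℤ)), ?_⟩
  intro y
  refine ⟨(IsFreeGroup.of x0) ^ (Multiplicative.toAdd y), ?_⟩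
  rw [map_zpow, IsFreeGroup.lift_of, ← ofAdd_zsmul, smul_eq_mul, mul_one, ofAdd_toAdd]

theorem surj_of_proj {G C : Type} [Group G] [Group C] (hC : LocallyIndicable C)
    (H : Subgroup G) (hfg : H.FG) (p : G →* C) (hx : ∃ x ∈ H, p x ≠ 1) :
    ∃ f : H →* Multiplicative ℤ, Function.Surjective f := by
  set q := p.comp H.subtype with hq
  have h1 : q.range ≠ ⊥ := by
    obtain ⟨x, hxH, hpx⟩ := hx
    intro hbot
    apply hpx
    have : q ⟨x, hxH⟩ ∈ q.range := ⟨_, rfl⟩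
    rw [hbot, Subgroup.mem_bot] at this
    exact this
  have h2 : q.range.FG := by
    haveI : Group.FG H := (Group.fg_iff_subgroup_fg H).2 hfg
    have := Group.fg_of_surjective q.rangeRestrict_surjective
    exact (Group.fg_iff_subgroup_fg q.range).1 this
  obtain ⟨f, hf⟩ := hC q.range h1 h2
  exact ⟨f.comp q.rangeRestrict, hf.comp q.rangeRestrict_surjective⟩

end CoprodLocIndAux

end Aux

open CoprodLocIndAux in
/-- A free product of locally indicable groups is locally indicable. -/
theorem locallyIndicable_coprod {A B : Type} [Group A] [Group B]
    (hA : LocallyIndicable A) (hB : LocallyIndicable B) :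
    LocallyIndicable (Coprod A B) := by
  intro H hne hfg
  by_cases h1 : ∃ x ∈ H, (Coprod.fst : Coprod A B →* A) x ≠ 1
  · exact surj_of_proj hA H hfg _ h1
  by_cases h2 : ∃ x ∈ H, (Coprod.snd : Coprod A B →* B) x ≠ 1
  · exact surj_of_proj hB H hfg _ h2
  push_neg at h1 h2
  -- H is contained in the kernel of `toProd`, which is a free group
  have hle : H ≤ MonoidHom.ker (Coprod.toProd : Coprod A B →* A × B) := by
    intro x hx
    rw [MonoidHom.mem_ker, ← Coprod.prod_mk_fst_snd, h1 x hx, h2 x hx]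
    rfl
  haveI : IsFreeGroup (MonoidHom.ker (Coprod.toProd : Coprod A B →* A × B)) :=
    isFreeGroup_ker_toProd A B
  set K := MonoidHom.ker (Coprod.toProd : Coprod A B →* A × B)
  set H' := H.subgroupOf K with hH'
  haveI : IsFreeGroup H' := inferInstance
  set e : H' ≃* H := Subgroup.subgroupOfEquivOfLe hle
  haveI : Nontrivial H := (Subgroup.nontrivial_iff_ne_bot H).2 hne
  haveI : Nontrivial H' := e.toEquiv.nontrivial
  obtain ⟨f, hf⟩ := exists_surj_of_isFreeGroup H'
  exact ⟨f.comp e.symm.toMonoidHom, hf.comp e.symm.surjective⟩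
end

section
/- Let G = ⟨X | R⟩ be an aspherical presentation in which no relator is conjugate to another relator or to the inverse of another relator. Suppose p₁⋯p_n = 1 in the free group F(X), where each p_i = u_i r_i^{e_i} u_i⁻¹ with u_i ∈ F(X), r_i ∈ R, e_i = ±1. Then the indices {1,…,n} fall into pairs (i,j) with r_i = r_j, e_i = −e_j, and u_i ∈ u_j N C_i, where N is the normal closure of R and C_i is the cyclic subgroup generated by the root s_i of r_i (r_i = s_i^{m_i} with s_i not a proper power). -/
/-- The set of conjugates of relators and their inverses. -/
def ConjRelator {X : Type} (R : Set (FreeGroup X)) : Set (FreeGroup X) :=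
  {p | ∃ (u r : FreeGroup X) (e : ℤ), r ∈ R ∧ (e = 1 ∨ e = -1) ∧ p = u * r ^ e * u⁻¹}

/-- Peiffer operations on sequences of conjugates of relators: deletion of an adjacent
inverse pair, and the two exchange moves. -/
inductive Peiffer {X : Type} : List (FreeGroup X) → List (FreeGroup X) → Prop
  | delete (L₁ L₂ : List (FreeGroup X)) (p : FreeGroup X) :
      Peiffer (L₁ ++ [p, p⁻¹] ++ L₂) (L₁ ++ L₂)
  | exchL (L₁ L₂ : List (FreeGroup X)) (p q : FreeGroup X) :
      Peiffer (L₁ ++ [p, q] ++ L₂) (L₁ ++ [q, q⁻¹ * p * q] ++ L₂)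
  | exchR (L₁ L₂ : List (FreeGroup X)) (p q : FreeGroup X) :
      Peiffer (L₁ ++ [p, q] ++ L₂) (L₁ ++ [p * q * p⁻¹, p] ++ L₂)

/-- A presentation is aspherical if every identity among the relators (a sequence of
conjugates of relators with trivial product) reduces to the empty sequence by Peiffer
operations. -/
def IsAspherical {X : Type} (R : Set (FreeGroup X)) : Prop :=
  ∀ L : List (FreeGroup X), (∀ p ∈ L, p ∈ ConjRelator R) → L.prod = 1 →
    Relation.ReflTransGen Peiffer L []

namespace AsphAux

variable {α : Type}

/-- Exponent-sum homomorphism at a letter. -/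
def expSum [DecidableEq α] (a : α) : FreeGroup α →* Multiplicative ℤ :=
  FreeGroup.lift (fun x => Multiplicative.ofAdd (if x = a then (1:ℤ) else 0))

@[simp] theorem expSum_of [DecidableEq α] (a x : α) :
    expSum a (FreeGroup.of x) = Multiplicative.ofAdd (if x = a then (1:ℤ) else 0) := by
  simp [expSum]

theorem of_mul_of_ne_comm [DecidableEq α] {a b : α} (h : a ≠ b) :
    FreeGroup.of a * FreeGroup.of b ≠ FreeGroup.of b * FreeGroup.of a := by
  intro hc
  have h1 : FreeGroup.mk [(a,true),(b,true)] = FreeGroup.mk [(b,true),(a,true)] := by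
    simpa [FreeGroup.of, FreeGroup.mul_mk] using hc
  have h2 := FreeGroup.reduce.sound h1
  have ra : FreeGroup.reduce [(a,true),(b,true)] = [(a,true),(b,true)] := by
    simp [FreeGroup.reduce.cons, FreeGroup.reduce_singleton, h]
  have rb : FreeGroup.reduce [(b,true),(a,true)] = [(b,true),(a,true)] := by
    simp [FreeGroup.reduce.cons, FreeGroup.reduce_singleton, h.symm]
  rw [ra, rb] at h2
  exact h (by injection h2 with h3 _; injection h3 with h4 _)

theorem eq_one_of_isEmpty [IsEmpty α] (w : FreeGroup α) : w = 1 := by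
  induction w using FreeGroup.induction_on with
  | C1 => rfl
  | of x => exact isEmptyElim x
  | inv_of x ih => rw [ih]; simp
  | mul x y hx hy => rw [hx, hy]; simp

theorem exists_zpow_of_subsingleton [Subsingleton α] (a : α) (w : FreeGroup α) :
    ∃ c : ℤ, w = FreeGroup.of a ^ c := by
  induction w using FreeGroup.induction_on with
  | C1 => exact ⟨0, by simp⟩
  | of x => exact ⟨1, by rw [Subsingleton.elim x a, zpow_one]⟩
  | inv_of x ih => obtain ⟨c, hc⟩ := ih; exact ⟨-c, by rw [hc, zpow_neg]⟩
  | mul x y hx hy =>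
      obtain ⟨c, hc⟩ := hx; obtain ⟨d, hd⟩ := hy
      exact ⟨c + d, by rw [hc, hd, zpow_add]⟩


/-- An abelian free group is cyclic. -/
theorem freeGroup_comm_cyclic {G : Type} [Group G] [IsFreeGroup G]
    (hab : ∀ x y : G, x * y = y * x) : ∃ h : G, ∀ x : G, ∃ c : ℤ, x = h ^ c := by
  classical
  let e := IsFreeGroup.mulEquiv G
  have hS : Subsingleton (IsFreeGroup.Generators G) := by
    constructor
    intro a b
    by_contra hne
    exact of_mul_of_ne_comm hne (e.injective (by simp only [map_mul]; exact hab _ _))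
  rcases isEmpty_or_nonempty (IsFreeGroup.Generators G) with hE | ⟨⟨a⟩⟩
  · refine ⟨1, fun x => ⟨0, ?_⟩⟩
    have : e.symm x = 1 := eq_one_of_isEmpty _
    have := congrArg e this
    simp only [MulEquiv.apply_symm_apply, map_one] at this
    simp [this]
  · refine ⟨e (FreeGroup.of a), fun x => ?_⟩
    obtain ⟨c, hc⟩ := exists_zpow_of_subsingleton a (e.symm x)
    refine ⟨c, ?_⟩
    have := congrArg e hc
    simpa only [MulEquiv.apply_symm_apply, map_zpow] using this

theorem closure_comm {G : Type} [Group G] (s : Set G)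
    (h : ∀ x ∈ s, ∀ y ∈ s, Commute x y) :
    ∀ x ∈ Subgroup.closure s, ∀ y ∈ Subgroup.closure s, Commute x y := by
  intro x hx
  induction hx using Subgroup.closure_induction with
  | mem x hx =>
      intro y hy
      induction hy using Subgroup.closure_induction with
      | mem y hy => exact h _ hx _ hy
      | one => exact Commute.one_right _
      | mul _ _ _ _ ih1 ih2 => exact ih1.mul_right ih2
      | inv _ _ ih => exact ih.inv_right
  | one => exact fun y hy => Commute.one_left _
  | mul a b _ _ iha ihb => exact fun y hy => (iha y hy).mul_left (ihb y hy)
  | inv a _ ih => exact fun y hy => (ih y hy).inv_left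

/-- Commuting elements of a free group are powers of a common element. -/
theorem commute_exists_common {G : Type} [Group G] [IsFreeGroup G] {x y : G}
    (h : Commute x y) :
    ∃ z : G, (∃ i : ℤ, x = z ^ i) ∧ ∃ j : ℤ, y = z ^ j := by
  have hcomm : ∀ a ∈ ({x, y} : Set G), ∀ b ∈ ({x, y} : Set G), Commute a b := by
    rintro a (rfl | rfl) b (rfl | rfl)
    · exact Commute.refl _
    · exact h
    · exact h.symm
    · exact Commute.refl _
  have hab : ∀ p q : Subgroup.closure ({x, y} : Set G), p * q = q * p := by
    intro p q
    exact Subtype.ext (closure_comm _ hcomm p p.2 q q.2)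
  obtain ⟨z, hz⟩ := freeGroup_comm_cyclic (G := Subgroup.closure ({x, y} : Set G)) hab
  have hx : x ∈ Subgroup.closure ({x, y} : Set G) :=
    Subgroup.subset_closure (by left; rfl)
  have hy : y ∈ Subgroup.closure ({x, y} : Set G) :=
    Subgroup.subset_closure (by right; rfl)
  obtain ⟨i, hi⟩ := hz ⟨x, hx⟩
  obtain ⟨j, hj⟩ := hz ⟨y, hy⟩
  refine ⟨z, ⟨i, ?_⟩, ⟨j, ?_⟩⟩
  · have := congrArg (Subtype.val) hi; simpa using this
  · have := congrArg (Subtype.val) hj; simpa using this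

/-- If a generator is a power, the base is the generator or its inverse. -/
theorem of_eq_zpow [DecidableEq α] {a : α} {t : FreeGroup α} {j : ℤ}
    (h : FreeGroup.of a = t ^ j) : t = FreeGroup.of a ∨ t = (FreeGroup.of a)⁻¹ := by
  have h1 : Multiplicative.ofAdd (1:ℤ) = expSum a t ^ j := by
    have := congrArg (expSum a) h
    simpa [expSum, map_zpow] using this
  have h2 : (1:ℤ) = j * Multiplicative.toAdd (expSum a t) := by
    have := congrArg Multiplicative.toAdd h1
    simpa [toAdd_zpow] using this
  have hu : IsUnit j := IsUnit.of_mul_eq_one (a := j) _ h2.symm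
  rcases Int.isUnit_iff.mp hu with rfl | rfl
  · left; rw [h, zpow_one]
  · right; rw [h]; simp

/-- A nontrivial element commuting with everything forces one generator;
    any central element is trivial if there are two distinct letters. -/
theorem central_eq_one [DecidableEq α] {a b : α} (hne : a ≠ b) (z : FreeGroup α)
    (hz : ∀ w : FreeGroup α, Commute z w) : z = 1 := by
  have hpow : ∀ x : α, ∃ p : ℤ, z = FreeGroup.of x ^ p := by
    intro x
    obtain ⟨t, ⟨j, hj⟩, ⟨i, hi⟩⟩ := commute_exists_common ((hz (FreeGroup.of x)).symm)
    rcases of_eq_zpow hj with rfl | ht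
    · exact ⟨i, hi⟩
    · exact ⟨-i, by rw [hi, ht, ← zpow_neg_one, ← zpow_mul]; ring_nf⟩
  obtain ⟨p, hp⟩ := hpow a
  obtain ⟨q, hq⟩ := hpow b
  have h1 : Multiplicative.toAdd (expSum a z) = p := by
    rw [hp, map_zpow, toAdd_zpow]
    simp [expSum]
  have h2 : Multiplicative.toAdd (expSum a z) = 0 := by
    rw [hq, map_zpow, toAdd_zpow]
    simp [expSum, hne.symm]
  have hp0 : p = 0 := by rw [← h1, h2]
  rw [hp, hp0, zpow_zero]


/-- A free group with a nontrivial central element is cyclic. -/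
theorem freeGroup_central_cyclic {G : Type} [Group G] [IsFreeGroup G] (z : G)
    (hz : z ≠ 1) (hc : ∀ x : G, Commute z x) :
    ∃ h : G, ∀ x : G, ∃ c : ℤ, x = h ^ c := by
  classical
  let e := IsFreeGroup.mulEquiv G
  have hζc : ∀ w : FreeGroup (IsFreeGroup.Generators G), Commute (e.symm z) w := by
    intro w
    have := hc (e w)
    have : e.symm (z * e w) = e.symm (e w * z) := congrArg e.symm this
    show e.symm z * w = w * e.symm z
    simpa [map_mul] using this
  have hζ : e.symm z ≠ 1 := by
    intro h1
    exact hz (by simpa using congrArg e h1)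
  have hS : Subsingleton (IsFreeGroup.Generators G) := by
    constructor
    intro a b
    by_contra hne
    exact hζ (central_eq_one hne _ hζc)
  rcases isEmpty_or_nonempty (IsFreeGroup.Generators G) with hE | ⟨⟨a⟩⟩
  case inl => exact absurd (eq_one_of_isEmpty (e.symm z)) hζ
  refine ⟨e (FreeGroup.of a), fun x => ?_⟩
  obtain ⟨c, hc'⟩ := exists_zpow_of_subsingleton a (e.symm x)
  exact ⟨c, by simpa only [MulEquiv.apply_symm_apply, map_zpow] using congrArg e hc'⟩

/-- Free groups are torsion-free (zpow version). -/
theorem freeGroup_zpow_eq_one {G : Type} [Group G] [IsFreeGroup G] {w : G} {d : ℤ}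
    (hd : d ≠ 0) (h : w ^ d = 1) : w = 1 := by
  classical
  set K := Subgroup.closure ({w} : Set G) with hK
  have hwK : w ∈ K := Subgroup.subset_closure rfl
  haveI : IsFreeGroup K := inferInstance
  have hab : ∀ p q : K, p * q = q * p := by
    intro p q
    have h2 : ∀ x ∈ ({w} : Set G), ∀ y ∈ ({w} : Set G), Commute x y := by
      intro x hx y hy
      rw [Set.mem_singleton_iff] at hx hy
      subst hx; subst hy; exact Commute.refl _
    exact Subtype.ext (closure_comm ({w} : Set G) h2 p p.2 q q.2)
  -- transport to FreeGroup S with S subsingleton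
  let e := IsFreeGroup.mulEquiv K
  have hS : Subsingleton (IsFreeGroup.Generators K) := by
    constructor
    intro a b
    by_contra hne
    have h1 : FreeGroup.of a * FreeGroup.of b = FreeGroup.of b * FreeGroup.of a :=
      e.injective (by simp only [map_mul]; exact hab _ _)
    exact of_mul_of_ne_comm hne h1
  set w' := e.symm ⟨w, hwK⟩ with hw'
  have hw'd : w' ^ d = 1 := by
    have : (⟨w, hwK⟩ : K) ^ d = 1 := Subtype.ext (by simpa using h)
    rw [hw', ← map_zpow, this, map_one]
  rcases isEmpty_or_nonempty (IsFreeGroup.Generators K) with hE | ⟨⟨a⟩⟩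
  · have : w' = 1 := eq_one_of_isEmpty w'
    have := congrArg e this
    simp only [hw', MulEquiv.apply_symm_apply, map_one] at this
    exact congrArg Subtype.val this
  · obtain ⟨c, hc⟩ := exists_zpow_of_subsingleton a w'
    have hdc : Multiplicative.toAdd (expSum a (w' ^ d)) = d * c := by
      rw [hc, ← zpow_mul, map_zpow, toAdd_zpow]
      simp [expSum, mul_comm]
    rw [hw'd] at hdc
    simp at hdc
    have hc0 : c = 0 := by
      rcases hdc with h2 | h2
      · exact absurd h2 hd
      · exact h2
    have : w' = 1 := by rw [hc, hc0, zpow_zero]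
    have := congrArg e this
    simp only [hw', MulEquiv.apply_symm_apply, map_one] at this
    exact congrArg Subtype.val this


/-- Root structure of a nontrivial element of a free group. -/
theorem exists_root {X : Type} (g : FreeGroup X) (hg : g ≠ 1) :
    ∃ s : FreeGroup X, (∃ m : ℕ, 1 ≤ m ∧ g = s ^ m) ∧
      (∀ (t : FreeGroup X) (k : ℕ), 2 ≤ k → s ≠ t ^ k) ∧
      (∀ w : FreeGroup X, Commute w g → ∃ c : ℤ, w = s ^ c) := by
  classical
  have hgC : g ∈ Subgroup.centralizer ({g} : Set (FreeGroup X)) := by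
    rw [Subgroup.mem_centralizer_iff]
    rintro x rfl
    rfl
  have hz : (⟨g, hgC⟩ : Subgroup.centralizer ({g} : Set (FreeGroup X))) ≠ 1 := by
    intro h1
    exact hg (congrArg Subtype.val h1)
  have hcen : ∀ x : Subgroup.centralizer ({g} : Set (FreeGroup X)),
      Commute (⟨g, hgC⟩ : Subgroup.centralizer ({g} : Set (FreeGroup X))) x := by
    intro x
    have hx : ∀ y ∈ ({g} : Set (FreeGroup X)), y * (x : FreeGroup X) = x * y :=
      Subgroup.mem_centralizer_iff.mp x.2
    exact Subtype.ext (hx g rfl)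
  obtain ⟨h, hh⟩ := freeGroup_central_cyclic (G := Subgroup.centralizer ({g} : Set (FreeGroup X)))
    ⟨g, hgC⟩ hz hcen
  obtain ⟨m0, hm0⟩ := hh ⟨g, hgC⟩
  have hgeq : g = (h : FreeGroup X) ^ m0 := by
    have := congrArg Subtype.val hm0
    simpa using this
  have hm0ne : m0 ≠ 0 := by
    rintro rfl
    exact hg (by simpa using hgeq)
  have hhne : (h : FreeGroup X) ≠ 1 := by
    intro h1
    exact hg (by rw [hgeq, h1, one_zpow])
  have hcent : ∀ w : FreeGroup X, Commute w g → ∃ c : ℤ, w = (h : FreeGroup X) ^ c := by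
    intro w hw
    have hwC : w ∈ Subgroup.centralizer ({g} : Set (FreeGroup X)) := by
      rw [Subgroup.mem_centralizer_iff]
      rintro x rfl
      exact hw.symm
    obtain ⟨c, hc⟩ := hh ⟨w, hwC⟩
    exact ⟨c, by simpa using congrArg Subtype.val hc⟩
  obtain ⟨ε, hεpm, hεm0⟩ : ∃ ε : ℤ, (ε = 1 ∨ ε = -1) ∧ m0 = ε * m0.natAbs := by
    rcases lt_or_gt_of_ne hm0ne with h' | h'
    · exact ⟨-1, Or.inr rfl, by omega⟩
    · exact ⟨1, Or.inl rfl, by omega⟩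
  have hεsq : ε * ε = 1 := by rcases hεpm with h1 | h1 <;> rw [h1] <;> norm_num
  set s : FreeGroup X := (h : FreeGroup X) ^ ε with hs
  have hhs : (h : FreeGroup X) = s ^ ε := by
    rw [hs, ← zpow_mul, hεsq, zpow_one]
  have hsh : ∀ c : ℤ, (h : FreeGroup X) ^ c = s ^ (ε * c) := by
    intro c
    rw [hs, ← zpow_mul, ← mul_assoc, hεsq, one_mul]
  refine ⟨s, ⟨m0.natAbs, by omega, ?_⟩, ?_, ?_⟩
  · -- g = s ^ m0.natAbs
    calc g = (h : FreeGroup X) ^ m0 := hgeq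
      _ = (h : FreeGroup X) ^ (ε * (m0.natAbs : ℤ)) := by rw [← hεm0]
      _ = s ^ ((m0.natAbs : ℤ)) := by rw [zpow_mul, ← hs]
      _ = s ^ m0.natAbs := zpow_natCast s m0.natAbs
  · -- s is not a proper power
    intro t k hk hstk
    have hts : Commute t s := by
      have : Commute t (t ^ k) := (Commute.refl t).pow_right k
      rwa [← hstk] at this
    have htg : Commute t g := by
      rw [hgeq, hhs]
      exact (hts.zpow_right ε).zpow_right m0
    obtain ⟨c, hc⟩ := hcent t htg
    have h1 : (h : FreeGroup X) ^ (c * k) = (h : FreeGroup X) ^ ε := by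
      rw [zpow_mul, ← hc, zpow_natCast, ← hstk, hs]
    have h2 : (h : FreeGroup X) ^ (c * k - ε) = 1 := by
      rw [zpow_sub, h1, mul_inv_cancel]
    have h3 : c * (k : ℤ) - ε = 0 := by
      by_contra h4
      exact hhne (freeGroup_zpow_eq_one h4 h2)
    have h5 : c * (k : ℤ) = ε := by omega
    have hdvd : (k : ℤ) ∣ 1 := ⟨c * ε, by rw [← hεsq, ← h5]; ring⟩
    have := Int.le_of_dvd one_pos hdvd
    omega
  · intro w hw
    obtain ⟨c, hc⟩ := hcent w hw
    exact ⟨ε * c, by rw [hc, hsh]⟩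

variable {X : Type} (R : Set (FreeGroup X)) {n : ℕ} (u rr : Fin n → FreeGroup X) (e : Fin n → ℤ)

def entry (t : Fin n × FreeGroup X) : FreeGroup X :=
  (u t.1 * t.2) * rr t.1 ^ e t.1 * (u t.1 * t.2)⁻¹

def Rel (i j : Fin n) : Prop :=
  i ≠ j ∧ rr j = rr i ∧ e j = - e i ∧
    ∃ s : FreeGroup X, (∃ m : ℕ, 1 ≤ m ∧ rr i = s ^ m) ∧
      (∀ (t : FreeGroup X) (k : ℕ), 2 ≤ k → s ≠ t ^ k) ∧
      ∃ ν ∈ Subgroup.normalClosure R, ∃ c : ℤ, u i = u j * ν * s ^ c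

theorem rel_symm {i j : Fin n} (h : Rel R u rr e i j) : Rel R u rr e j i := by
  obtain ⟨hne, hrr, he, s, hroot, hnp, ν, hν, c, hu⟩ := h
  refine ⟨hne.symm, hrr.symm, by omega, s, ?_, hnp, ?_⟩
  · obtain ⟨m, hm, hrs⟩ := hroot
    exact ⟨m, hm, hrr ▸ hrs⟩
  · refine ⟨s ^ (-c) * ν⁻¹ * (s ^ (-c))⁻¹, ?_, -c, ?_⟩
    · exact Subgroup.Normal.conj_mem Subgroup.normalClosure_normal
        ν⁻¹ (Subgroup.inv_mem _ hν) (s ^ (-c))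
    · rw [hu]; group

theorem entry_mem (hr : ∀ i, rr i ∈ R) (t : Fin n × FreeGroup X) :
    entry u rr e t ∈ Subgroup.normalClosure R := by
  have h1 : rr t.1 ∈ Subgroup.normalClosure R :=
    Subgroup.subset_normalClosure (hr t.1)
  have h2 : rr t.1 ^ e t.1 ∈ Subgroup.normalClosure R :=
    Subgroup.zpow_mem _ h1 _
  have h3 := Subgroup.Normal.conj_mem Subgroup.normalClosure_normal
    _ h2 (u t.1 * t.2)
  simpa [entry, mul_assoc] using h3

theorem rel_of_entry_inv
    (hconj : ∀ r ∈ R, ∀ s ∈ R, (r ≠ s → ¬ IsConj r s) ∧ ¬ IsConj r s⁻¹)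
    (hr : ∀ i, rr i ∈ R) (he : ∀ i, e i = 1 ∨ e i = -1)
    (t₁ t₂ : Fin n × FreeGroup X)
    (hν₁ : t₁.2 ∈ Subgroup.normalClosure R) (hν₂ : t₂.2 ∈ Subgroup.normalClosure R)
    (hne : t₁.1 ≠ t₂.1)
    (heq : entry u rr e t₂ = (entry u rr e t₁)⁻¹) :
    Rel R u rr e t₁.1 t₂.1 := by
  classical
  set i := t₁.1
  set j := t₂.1
  set wi := u i * t₁.2 with hwi
  set wj := u j * t₂.2 with hwj
  have heq' : wj * rr j ^ e j * wj⁻¹ = wi * rr i ^ (-(e i)) * wi⁻¹ := by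
    have : entry u rr e t₂ = (entry u rr e t₁)⁻¹ := heq
    simp only [entry, ← hwi, ← hwj] at this
    rw [this, zpow_neg]
    show (wi * rr i ^ e i * wi⁻¹)⁻¹ = wi * (rr i ^ e i)⁻¹ * wi⁻¹
    group
  have hcc : ∀ a b : FreeGroup X, wj * a * wj⁻¹ = wi * b * wi⁻¹ →
      IsConj b a := by
    intro a b hab
    rw [isConj_iff]
    refine ⟨wj⁻¹ * wi, ?_⟩
    have := congrArg (fun z => wj⁻¹ * z * wj) hab
    calc wj⁻¹ * wi * b * (wj⁻¹ * wi)⁻¹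
        = wj⁻¹ * (wi * b * wi⁻¹) * wj := by group
      _ = wj⁻¹ * (wj * a * wj⁻¹) * wj := by rw [← hab]
      _ = a := by group
  -- determine signs
  have hrij : rr j = rr i ∧ e j = - e i := by
    rcases he i with hei | hei <;> rcases he j with hej | hej
    · -- e i = 1, e j = 1 : IsConj (rr i)⁻¹ (rr j), contradiction
      exfalso
      have h1 : IsConj ((rr i)⁻¹) (rr j) := by
        have := hcc (rr j ^ e j) (rr i ^ (-(e i))) heq'
        rw [hei, hej] at this
        simpa [zpow_neg, zpow_one] using this
      exact (hconj (rr j) (hr j) (rr i) (hr i)).2 h1.symm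
    · -- e i = 1, e j = -1 : IsConj (rr i)⁻¹ (rr j)⁻¹
      have h1 : IsConj ((rr i)⁻¹) ((rr j)⁻¹) := by
        have := hcc (rr j ^ e j) (rr i ^ (-(e i))) heq'
        rw [hei, hej] at this
        simpa [zpow_neg, zpow_one] using this
      have h2 : IsConj (rr i) (rr j) := by
        obtain ⟨c, hc⟩ := isConj_iff.mp h1
        have h5 : (c * (rr i)⁻¹ * c⁻¹)⁻¹ = rr j := by rw [hc, inv_inv]
        rw [show (c * (rr i)⁻¹ * c⁻¹)⁻¹ = c * rr i * c⁻¹ by group] at h5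
        exact isConj_iff.mpr ⟨c, h5⟩
      have h3 : rr i = rr j := by
        by_contra h4
        exact (hconj (rr i) (hr i) (rr j) (hr j)).1 h4 h2
      exact ⟨h3.symm, by omega⟩
    · -- e i = -1, e j = 1 : IsConj (rr i) (rr j)
      have h1 : IsConj (rr i) (rr j) := by
        have := hcc (rr j ^ e j) (rr i ^ (-(e i))) heq'
        rw [hei, hej] at this
        simpa [zpow_neg, zpow_one] using this
      have h3 : rr i = rr j := by
        by_contra h4
        exact (hconj (rr i) (hr i) (rr j) (hr j)).1 h4 h1
      exact ⟨h3.symm, by omega⟩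
    · -- e i = -1, e j = -1 : IsConj (rr i) (rr j)⁻¹, contradiction
      exfalso
      have h1 : IsConj (rr i) ((rr j)⁻¹) := by
        have := hcc (rr j ^ e j) (rr i ^ (-(e i))) heq'
        rw [hei, hej] at this
        simpa [zpow_neg, zpow_one] using this
      exact (hconj (rr i) (hr i) (rr j) (hr j)).2 h1
  obtain ⟨hrr, hee⟩ := hrij
  -- now extract the commuting element
  have hcomm : Commute (wi⁻¹ * wj) (rr i) := by
    have h1 : wj * rr i ^ (-(e i)) * wj⁻¹ = wi * rr i ^ (-(e i)) * wi⁻¹ := by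
      have h0 := heq'
      rwa [hrr, hee] at h0
    have h2 : Commute (wi⁻¹ * wj) (rr i ^ (-(e i))) := by
      have := congrArg (fun z => wi⁻¹ * z * wj) h1
      show (wi⁻¹ * wj) * rr i ^ (-(e i)) = rr i ^ (-(e i)) * (wi⁻¹ * wj)
      calc (wi⁻¹ * wj) * rr i ^ (-(e i))
          = wi⁻¹ * (wj * rr i ^ (-(e i)) * wj⁻¹) * wj := by group
        _ = wi⁻¹ * (wi * rr i ^ (-(e i)) * wi⁻¹) * wj := by rw [h1]
        _ = rr i ^ (-(e i)) * (wi⁻¹ * wj) := by group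
    rcases he i with hei | hei
    · rw [hei] at h2
      simpa using h2.inv_right
    · rw [hei] at h2
      simpa using h2
  have hri1 : rr i ≠ 1 := by
    intro h1
    have : IsConj (rr i) ((rr i)⁻¹) := by rw [h1]; simp
    exact (hconj (rr i) (hr i) (rr i) (hr i)).2 this
  obtain ⟨s, hroot, hnp, hcent⟩ := exists_root (rr i) hri1
  obtain ⟨c0, hc0⟩ := hcent (wi⁻¹ * wj) hcomm
  have hwieq : wi = wj * s ^ (-c0) := by
    rw [zpow_neg, ← hc0]
    group
  have hui : u i = u j * t₂.2 * s ^ (-c0) * (t₁.2)⁻¹ := by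
    have : u i * t₁.2 = u j * t₂.2 * s ^ (-c0) := hwieq
    calc u i = (u i * t₁.2) * (t₁.2)⁻¹ := by group
      _ = u j * t₂.2 * s ^ (-c0) * (t₁.2)⁻¹ := by rw [this]
  refine ⟨hne, hrr, hee, s, hroot, hnp,
    t₂.2 * (s ^ (-c0) * (t₁.2)⁻¹ * (s ^ (-c0))⁻¹), ?_, -c0, ?_⟩
  · exact Subgroup.mul_mem _ hν₂
      (Subgroup.Normal.conj_mem Subgroup.normalClosure_normal
        (t₁.2)⁻¹ (Subgroup.inv_mem _ hν₁) (s ^ (-c0)))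
  · rw [hui]; group


theorem split_two (Λ : List (Fin n × FreeGroup X)) (L₁ L₂ : List (FreeGroup X))
    (p q : FreeGroup X)
    (h : L₁ ++ [p, q] ++ L₂ = Λ.map (entry u rr e)) :
    ∃ Λa t₁ t₂ Λc, Λ = Λa ++ [t₁, t₂] ++ Λc ∧ Λa.map (entry u rr e) = L₁ ∧
      entry u rr e t₁ = p ∧ entry u rr e t₂ = q ∧ Λc.map (entry u rr e) = L₂ := by
  have h' := h.symm
  rw [List.map_eq_append_iff] at h'
  obtain ⟨Λab, Λc, rfl, hab, hc⟩ := h'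
  rw [List.map_eq_append_iff] at hab
  obtain ⟨Λa, Λd, rfl, ha, hd⟩ := hab
  match Λd, hd with
  | [t₁, t₂], hd =>
    simp only [List.map_cons, List.map_nil, List.cons.injEq, and_true] at hd
    exact ⟨Λa, t₁, t₂, Λc, rfl, ha, hd.1, hd.2, hc⟩

theorem key
    (hconj : ∀ r ∈ R, ∀ s ∈ R, (r ≠ s → ¬ IsConj r s) ∧ ¬ IsConj r s⁻¹)
    (hr : ∀ i, rr i ∈ R) (he : ∀ i, e i = 1 ∨ e i = -1)
    (L : List (FreeGroup X)) (hred : Relation.ReflTransGen Peiffer L []) :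
    ∀ Λ : List (Fin n × FreeGroup X),
      (∀ t ∈ Λ, t.2 ∈ Subgroup.normalClosure R) →
      (Λ.map Prod.fst).Nodup → L = Λ.map (entry u rr e) →
      ∃ P : List (Fin n × Fin n),
        (Λ.map Prod.fst).Perm (P.flatMap fun p => [p.1, p.2]) ∧
        ∀ p ∈ P, Rel R u rr e p.1 p.2 := by
  induction hred using Relation.ReflTransGen.head_induction_on with
  | refl =>
      intro Λ hm hnd hΛ
      have hΛnil : Λ = [] := by
        cases Λ with
        | nil => rfl
        | cons a l => simp at hΛ
      subst hΛnil
      exact ⟨[], by simp, by simp⟩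
  | head hstep hrest ih =>
      intro Λ hm hnd hΛ
      cases hstep with
      | delete L₁ L₂ p =>
          obtain ⟨Λa, t₁, t₂, Λc, rfl, ha, hp, hq, hc⟩ :=
            split_two u rr e Λ L₁ L₂ p p⁻¹ hΛ
          have hsubl : List.Sublist (Λa ++ Λc) (Λa ++ [t₁, t₂] ++ Λc) := by
            rw [List.append_assoc]
            exact (List.sublist_append_right [t₁, t₂] Λc).append_left Λa
          have hne : t₁.1 ≠ t₂.1 := by
            have h1 : (([t₁, t₂] : List (Fin n × FreeGroup X)).map Prod.fst).Nodup := by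
              refine List.Nodup.sublist ?_ hnd
              refine List.Sublist.map _ ?_
              rw [List.append_assoc]
              exact ((List.sublist_append_right Λa _).trans
                (((List.sublist_append_left [t₁,t₂] Λc)).append_left Λa)).trans
                (List.Sublist.refl _)
            simpa using h1
          have hrel : Rel R u rr e t₁.1 t₂.1 := by
            refine rel_of_entry_inv R u rr e hconj hr he t₁ t₂ ?_ ?_ hne ?_
            · exact hm t₁ (by simp)
            · exact hm t₂ (by simp)
            · rw [hq, hp]
          obtain ⟨P, hperm, hP⟩ := ih (Λa ++ Λc)
            (fun t ht => hm t (hsubl.mem ht))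
            (hnd.sublist (hsubl.map Prod.fst))
            (by rw [List.map_append, ha, hc])
          refine ⟨(t₁.1, t₂.1) :: P, ?_, ?_⟩
          · have hperm' : (List.map Prod.fst Λa ++ List.map Prod.fst Λc).Perm
                (P.flatMap fun p => [p.1, p.2]) := by
              simpa [List.map_append] using hperm
            simp only [List.map_append, List.map_cons, List.map_nil, List.append_assoc,
              List.cons_append, List.nil_append, List.flatMap_cons]
            exact List.Perm.trans List.perm_middle
              (List.Perm.trans ((List.perm_middle).cons t₁.1)
                ((hperm'.cons t₂.1).cons t₁.1))
          · intro p hp'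
            rcases List.mem_cons.mp hp' with h1 | h1
            · subst h1; exact hrel
            · exact hP p h1
      | exchL L₁ L₂ p q =>
          obtain ⟨Λa, t₁, t₂, Λc, rfl, ha, hp, hq, hc⟩ :=
            split_two u rr e Λ L₁ L₂ p q hΛ
          set t₁' : Fin n × FreeGroup X :=
            (t₁.1, (u t₁.1)⁻¹ * q⁻¹ * u t₁.1 * t₁.2) with ht₁'
          have hqN : q ∈ Subgroup.normalClosure R := by
            rw [← hq]; exact entry_mem R u rr e hr t₂
          have hentry' : entry u rr e t₁' = q⁻¹ * p * q := by
            rw [← hp]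
            simp only [entry, ht₁']
            group
          have hmem' : t₁'.2 ∈ Subgroup.normalClosure R := by
            refine Subgroup.mul_mem _ ?_ (hm t₁ (by simp))
            have := Subgroup.Normal.conj_mem Subgroup.normalClosure_normal
              q⁻¹ (Subgroup.inv_mem _ hqN) (u t₁.1)⁻¹
            simpa [mul_assoc] using this
          have hperm2 : ((Λa ++ [t₁, t₂] ++ Λc).map Prod.fst).Perm
              ((Λa ++ [t₂, t₁'] ++ Λc).map Prod.fst) := by
            have hswap : List.Perm [t₁.1, t₂.1] [t₂.1, t₁'.1] :=
              List.Perm.swap t₂.1 t₁.1 []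
            have := (hswap.append_right (Λc.map Prod.fst)).append_left (Λa.map Prod.fst)
            simpa [List.map_append, List.append_assoc] using this
          obtain ⟨P, hperm, hP⟩ := ih (Λa ++ [t₂, t₁'] ++ Λc)
            (by
              intro x hx
              simp only [List.mem_append, List.mem_cons, List.not_mem_nil, or_false] at hx
              rcases hx with (hx | hx | hx) | hx
              · exact hm x (by simp [hx])
              · rw [hx]; exact hm t₂ (by simp)
              · rw [hx]; exact hmem'
              · exact hm x (by simp [hx]))
            ((hperm2.nodup_iff).mp hnd)
            (by simp only [List.map_append, List.map_cons, List.map_nil, ha, hc, hq, hentry'])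
          exact ⟨P, hperm2.trans hperm, hP⟩
      | exchR L₁ L₂ p q =>
          obtain ⟨Λa, t₁, t₂, Λc, rfl, ha, hp, hq, hc⟩ :=
            split_two u rr e Λ L₁ L₂ p q hΛ
          set t₂' : Fin n × FreeGroup X :=
            (t₂.1, (u t₂.1)⁻¹ * p * u t₂.1 * t₂.2) with ht₂'
          have hpN : p ∈ Subgroup.normalClosure R := by
            rw [← hp]; exact entry_mem R u rr e hr t₁
          have hentry' : entry u rr e t₂' = p * q * p⁻¹ := by
            rw [← hq]
            simp only [entry, ht₂']
            group
          have hmem' : t₂'.2 ∈ Subgroup.normalClosure R := by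
            refine Subgroup.mul_mem _ ?_ (hm t₂ (by simp))
            have := Subgroup.Normal.conj_mem Subgroup.normalClosure_normal
              p hpN (u t₂.1)⁻¹
            simpa [mul_assoc] using this
          have hperm2 : ((Λa ++ [t₁, t₂] ++ Λc).map Prod.fst).Perm
              ((Λa ++ [t₂', t₁] ++ Λc).map Prod.fst) := by
            have hswap : List.Perm [t₁.1, t₂.1] [t₂'.1, t₁.1] :=
              List.Perm.swap t₂.1 t₁.1 []
            have := (hswap.append_right (Λc.map Prod.fst)).append_left (Λa.map Prod.fst)
            simpa [List.map_append, List.append_assoc] using this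
          obtain ⟨P, hperm, hP⟩ := ih (Λa ++ [t₂', t₁] ++ Λc)
            (by
              intro x hx
              simp only [List.mem_append, List.mem_cons, List.not_mem_nil, or_false] at hx
              rcases hx with (hx | hx | hx) | hx
              · exact hm x (by simp [hx])
              · rw [hx]; exact hmem'
              · rw [hx]; exact hm t₁ (by simp)
              · exact hm x (by simp [hx]))
            ((hperm2.nodup_iff).mp hnd)
            (by simp only [List.map_append, List.map_cons, List.map_nil, ha, hc, hp, hentry'])
          exact ⟨P, hperm2.trans hperm, hP⟩


theorem pair_unique {n : ℕ} (P : List (Fin n × Fin n))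
    (hnd : (P.flatMap fun p => [p.1, p.2]).Nodup) :
    ∀ p ∈ P, ∀ q ∈ P, ∀ i : Fin n,
      (i = p.1 ∨ i = p.2) → (i = q.1 ∨ i = q.2) → p = q := by
  induction P with
  | nil => intro p hp; simp at hp
  | cons p₀ P' ih =>
      intro p hp q hq i hip hiq
      have hnd' : (p₀.1 :: p₀.2 :: P'.flatMap fun p => [p.1, p.2]).Nodup := by
        simpa [List.flatMap_cons] using hnd
      have h1 : p₀.1 ∉ (p₀.2 :: P'.flatMap fun p => [p.1, p.2]) :=
        (List.nodup_cons.mp hnd').1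
      have h2 : p₀.2 ∉ (P'.flatMap fun p => [p.1, p.2]) :=
        (List.nodup_cons.mp (List.nodup_cons.mp hnd').2).1
      have h3 : (P'.flatMap fun p => [p.1, p.2]).Nodup :=
        (List.nodup_cons.mp (List.nodup_cons.mp hnd').2).2
      have hmemb : ∀ r ∈ P', ∀ j : Fin n, (j = r.1 ∨ j = r.2) →
          j ∈ P'.flatMap fun p => [p.1, p.2] := by
        intro r hr j hj
        exact List.mem_flatMap.mpr ⟨r, hr, by rcases hj with rfl | rfl <;> simp⟩
      rcases List.mem_cons.mp hp with rfl | hp' <;> rcases List.mem_cons.mp hq with rfl | hq'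
      · rfl
      · exfalso
        have hjb := hmemb q hq' i hiq
        rcases hip with rfl | rfl
        · exact h1 (List.mem_cons_of_mem _ hjb)
        · exact h2 hjb
      · exfalso
        have hjb := hmemb p hp' i hip
        rcases hiq with rfl | rfl
        · exact h1 (List.mem_cons_of_mem _ hjb)
        · exact h2 hjb
      · exact ih h3 p hp' q hq' i hip hiq

theorem exists_perm {n : ℕ} (P : List (Fin n × Fin n)) (Rel' : Fin n → Fin n → Prop)
    (hnd : (P.flatMap fun p => [p.1, p.2]).Nodup)
    (hcov : ∀ i : Fin n, i ∈ P.flatMap fun p => [p.1, p.2])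
    (hsymm : ∀ i j, Rel' i j → Rel' j i)
    (hP : ∀ p ∈ P, Rel' p.1 p.2)
    (hirr : ∀ p ∈ P, p.1 ≠ p.2) :
    ∃ σ : Equiv.Perm (Fin n), (∀ i, σ i ≠ i) ∧ σ⁻¹ = σ ∧ ∀ i, Rel' i (σ i) := by
  classical
  have hex : ∀ i : Fin n, ∃ p, p ∈ P ∧ (i = p.1 ∨ i = p.2) := by
    intro i
    obtain ⟨p, hp, hi⟩ := List.mem_flatMap.mp (hcov i)
    exact ⟨p, hp, by simpa using hi⟩
  choose pf hpf₁ hpf₂ using hex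
  let f : Fin n → Fin n := fun i => if i = (pf i).1 then (pf i).2 else (pf i).1
  have key1 : ∀ i, (i = (pf i).1 ∧ f i = (pf i).2) ∨
      (i = (pf i).2 ∧ f i = (pf i).1 ∧ i ≠ (pf i).1) := by
    intro i
    by_cases h : i = (pf i).1
    · exact Or.inl ⟨h, by simp only [f, if_pos h]⟩
    · refine Or.inr ⟨(hpf₂ i).resolve_left h, by simp only [f, if_neg h], h⟩
  have hfne : ∀ i, f i ≠ i := by
    intro i h
    rcases key1 i with ⟨hi, hfi⟩ | ⟨hi, hfi, _⟩
    · exact hirr _ (hpf₁ i) (calc (pf i).1 = i := hi.symm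
        _ = f i := h.symm
        _ = (pf i).2 := hfi)
    · exact hirr _ (hpf₁ i) (calc (pf i).1 = f i := hfi.symm
        _ = i := h
        _ = (pf i).2 := hi)
  have hRel : ∀ i, Rel' i (f i) := by
    intro i
    rcases key1 i with ⟨hi, hfi⟩ | ⟨hi, hfi, _⟩
    · have h0 := hP _ (hpf₁ i)
      rwa [← hi, ← hfi] at h0
    · have h0 := hsymm _ _ (hP _ (hpf₁ i))
      rwa [← hi, ← hfi] at h0
  have hff : ∀ i, f (f i) = i := by
    intro i
    have h1 : f i = (pf i).1 ∨ f i = (pf i).2 := by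
      rcases key1 i with ⟨_, h⟩ | ⟨_, h, _⟩
      · exact Or.inr h
      · exact Or.inl h
    have h2 : pf (f i) = pf i :=
      pair_unique P hnd _ (hpf₁ (f i)) _ (hpf₁ i) (f i) (hpf₂ (f i)) h1
    rcases key1 i with ⟨hi, hfi⟩ | ⟨hi, hfi, _⟩
    · show (if f i = (pf (f i)).1 then (pf (f i)).2 else (pf (f i)).1) = i
      rw [h2, hfi, if_neg (hirr _ (hpf₁ i)).symm, ← hi]
    · show (if f i = (pf (f i)).1 then (pf (f i)).2 else (pf (f i)).1) = i
      rw [h2, hfi, if_pos rfl, ← hi]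
  refine ⟨⟨f, f, hff, hff⟩, hfne, ?_, hRel⟩
  ext i
  rfl


end AsphAux

/-- **Lyndon–Schupp III.10.2.** In an aspherical presentation with no relator conjugate
to another relator or to the inverse of a relator, any trivial product of conjugates of
relators pairs off. -/
theorem aspherical_pairing {X : Type} (R : Set (FreeGroup X))
    (hasp : IsAspherical R)
    (hconj : ∀ r ∈ R, ∀ s ∈ R, (r ≠ s → ¬ IsConj r s) ∧ ¬ IsConj r s⁻¹)
    (n : ℕ) (u rr : Fin n → FreeGroup X) (e : Fin n → ℤ)
    (hr : ∀ i, rr i ∈ R) (he : ∀ i, e i = 1 ∨ e i = -1)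
    (hprod : (List.ofFn fun i => u i * rr i ^ e i * (u i)⁻¹).prod = 1) :
    ∃ σ : Equiv.Perm (Fin n), (∀ i, σ i ≠ i) ∧ σ⁻¹ = σ ∧
      ∀ i, rr (σ i) = rr i ∧ e (σ i) = - e i ∧
        ∃ s : FreeGroup X, (∃ m : ℕ, 1 ≤ m ∧ rr i = s ^ m) ∧
          (∀ (t : FreeGroup X) (k : ℕ), 2 ≤ k → s ≠ t ^ k) ∧
          ∃ ν ∈ Subgroup.normalClosure R, ∃ c : ℤ, u i = u (σ i) * ν * s ^ c := by
  classical
  set Λ₀ : List (Fin n × FreeGroup X) := List.ofFn (fun i => (i, (1 : FreeGroup X))) with hΛ₀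
  have hL : (List.ofFn fun i => u i * rr i ^ e i * (u i)⁻¹) = Λ₀.map (AsphAux.entry u rr e) := by
    rw [hΛ₀, List.map_ofFn]
    congr 1
    funext i
    simp [AsphAux.entry, Function.comp]
  have hconjmem : ∀ p ∈ (List.ofFn fun i => u i * rr i ^ e i * (u i)⁻¹), p ∈ ConjRelator R := by
    intro p hp
    obtain ⟨i, rfl⟩ := (List.mem_ofFn' _ _).mp hp
    exact ⟨u i, rr i, e i, hr i, he i, rfl⟩
  have hred := hasp _ hconjmem hprod
  have hmem : ∀ t ∈ Λ₀, t.2 ∈ Subgroup.normalClosure R := by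
    intro t ht
    rw [hΛ₀] at ht
    obtain ⟨i, rfl⟩ := (List.mem_ofFn' _ _).mp ht
    exact Subgroup.one_mem _
  have hnd : (Λ₀.map Prod.fst).Nodup := by
    rw [hΛ₀, List.map_ofFn]
    exact List.nodup_ofFn.mpr (fun i j h => by simpa using h)
  obtain ⟨P, hperm, hP⟩ := AsphAux.key R u rr e hconj hr he _ hred Λ₀ hmem hnd hL
  have hnd2 := (hperm.nodup_iff).mp hnd
  have hcov : ∀ i : Fin n, i ∈ P.flatMap fun p => [p.1, p.2] := by
    intro i
    refine hperm.mem_iff.mp ?_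
    rw [hΛ₀, List.map_ofFn]
    exact (List.mem_ofFn' _ _).mpr ⟨i, rfl⟩
  obtain ⟨σ, hσ1, hσ2, hσ3⟩ := AsphAux.exists_perm P (AsphAux.Rel R u rr e) hnd2 hcov
    (fun i j h => AsphAux.rel_symm R u rr e h) hP (fun p hp => (hP p hp).1)
  refine ⟨σ, hσ1, hσ2, fun i => ?_⟩
  obtain ⟨hne, hrr2, hee2, hrest⟩ := hσ3 i
  exact ⟨hrr2, hee2, hrest⟩
end
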